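/- arXiv:1707.08890 — 7 statements merged into one kernel-verified Lean document; each statement's English description precedes it below -/
import Mathlib

section
/- Let 0 < α < 2, c > 0, and let μ₁, μ₂ ∈ S(α, c). Let Z₁, …, Z_n be i.i.d. with distribution μ₁ and Z₁*, …, Z_n* be i.i.d. with distribution μ₂. Let (a₁, …, a_n) ∈ ℝⁿ, A_n = (Σ_{k=1}^n |a_k|^α)^{1/α}, and δ_n = max_{1≤k≤n} |a_k| / A_n. Then for every t ∈ ℝ with |t|·δ_n ≤ 1 one has |E exp(i t A_n^{-1} Σ_{k=1}^n a_k Z_k) − E exp(i t A_n^{-1} Σ_{k=1}^n a_k Z_k*)| ≤ |t|^α · ρ(μ₁, μ₂). -/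
open MeasureTheory Filter Finset
open scoped Topology BoundedContinuousFunction ENNReal

/-- The characteristic function of a measure on `ℝ`. -/
noncomputable def charFn (μ : Measure ℝ) (t : ℝ) : ℂ :=
  ∫ x, Complex.exp (Complex.I * (t * x)) ∂μ

/-- `μ ∈ S(α, c)`: `μ` is a symmetric probability distribution on `ℝ` whose characteristic
function satisfies `φ(t) = 1 - c|t|^α + o(|t|^α)` as `t → 0`. -/
def MemS (α c : ℝ) (μ : Measure ℝ) : Prop :=
  IsProbabilityMeasure μ ∧ μ.map (fun x => -x) = μ ∧
    Asymptotics.IsLittleO (𝓝 (0 : ℝ))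
      (fun t : ℝ => charFn μ t - ((1 - c * |t| ^ α : ℝ) : ℂ))
      (fun t : ℝ => |t| ^ α)

/-- `β` is the function associated with `μ ∈ S(α, c)`:
`φ(t) = 1 - c|t|^α + β(t)|t|^α` with `β` bounded continuous and `β 0 = 0`. -/
structure IsAssocFn (α c : ℝ) (μ : Measure ℝ) (β : ℝ → ℝ) : Prop where
  continuous : Continuous β
  bounded : ∃ M : ℝ, ∀ t, |β t| ≤ M
  zero : β 0 = 0
  eq : ∀ t : ℝ, charFn μ t = ((1 - c * |t| ^ α + β t * |t| ^ α : ℝ) : ℂ)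

/-- The metric `ρ` on `S(α, c)`, expressed in terms of the associated functions. -/
noncomputable def rho (β₁ β₂ : ℝ → ℝ) : ℝ :=
  (⨆ t : {t : ℝ // |t| ≤ 1}, |β₁ t.1 - β₂ t.1|) +
    ∑' k : ℕ, (2 ^ k : ℝ)⁻¹ *
      ⨆ t : {t : ℝ // 2 ^ k ≤ |t| ∧ |t| ≤ 2 ^ (k + 1)}, |β₁ t.1 - β₂ t.1|

/-- The normalization `A_N = (∑_{k=1}^N |a_k|^α)^{1/α}`. -/
noncomputable def wA (α : ℝ) (a : ℕ → ℝ) (N : ℕ) : ℝ :=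
  (∑ k ∈ Finset.range N, |a k| ^ α) ^ (1 / α)

/-- The uniform asymptotic negligibility condition `max_{1≤k≤N} |a_k| = o(A_N)`. -/
def UAN (α : ℝ) (a : ℕ → ℝ) : Prop :=
  ∀ ε > (0 : ℝ), ∃ N₀ : ℕ, ∀ N ≥ N₀, ∀ k < N, |a k| ≤ ε * wA α a N

/-- `F` is a distribution function. -/
def IsDistFun (F : ℝ → ℝ) : Prop :=
  Monotone F ∧ Tendsto F atBot (𝓝 0) ∧ Tendsto F atTop (𝓝 1)

/-- `(X_n)` is a determining sequence: relative to any set `A` of positive probability, it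
has a limit distribution `F_A`. -/
def Determining {Ω : Type*} [MeasurableSpace Ω] (P : Measure Ω) (X : ℕ → Ω → ℝ) : Prop :=
  ∀ A : Set Ω, MeasurableSet A → P A ≠ 0 →
    ∃ F : ℝ → ℝ, IsDistFun F ∧
      ∀ t : ℝ, ContinuousAt F t →
        Tendsto (fun n => (P (A ∩ {ω | X n ω < t})).toReal / (P A).toReal) atTop (𝓝 (F t))

/-- `μ` is the limit random measure of the determining sequence `(X_n)`: a measurable map to
the probability measures on `ℝ` such that for every continuity point `t` of `F_Ω` the
indicators `1{X_n ≤ t}` converge weakly in `L^∞` to `μ(-∞, t]`. -/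
def IsLimitRandomMeasure {Ω : Type*} [MeasurableSpace Ω] (P : Measure Ω)
    (X : ℕ → Ω → ℝ) (μ : Ω → Measure ℝ) : Prop :=
  (∀ ω, IsProbabilityMeasure (μ ω)) ∧
  (∀ s : Set ℝ, MeasurableSet s → Measurable fun ω => μ ω s) ∧
  ∃ F : ℝ → ℝ, IsDistFun F ∧
    (∀ t : ℝ, ContinuousAt F t →
      Tendsto (fun n => (P {ω | X n ω < t}).toReal) atTop (𝓝 (F t))) ∧
    ∀ t : ℝ, ContinuousAt F t → ∀ η : Ω → ℝ, Integrable η P →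
      Tendsto (fun n => ∫ ω, ({ω' | X n ω' ≤ t}.indicator (fun _ => (1 : ℝ)) ω) * η ω ∂P)
        atTop (𝓝 (∫ ω, (μ ω (Set.Iic t)).toReal * η ω ∂P))

section AuxLemmas

open ProbabilityTheory

lemma pair_integral_mul_cexp {Ω : Type*} [MeasurableSpace Ω] {P : Measure Ω} [IsFiniteMeasure P]
    {W V : Ω → ℝ} (hW : Measurable W) (hV : Measurable V) (h : IndepFun W V P)
    {f g : ℝ → ℂ} (hf : Measurable f) (hg : Measurable g) :
    ∫ ω, f (W ω) * g (V ω) ∂P = (∫ ω, f (W ω) ∂P) * ∫ ω, g (V ω) ∂P := by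
  have hmap := (indepFun_iff_map_prod_eq_prod_map_map hW.aemeasurable hV.aemeasurable).mp h
  have h1 : ∫ ω, f (W ω) * g (V ω) ∂P
      = ∫ z : ℝ × ℝ, f z.1 * g z.2 ∂(P.map fun ω => (W ω, V ω)) :=
    (integral_map (hW.prodMk hV).aemeasurable
      ((hf.comp measurable_fst).mul (hg.comp measurable_snd)).aestronglyMeasurable).symm
  rw [h1, hmap, integral_prod_mul,
    integral_map hW.aemeasurable hf.aestronglyMeasurable,
    integral_map hV.aemeasurable hg.aestronglyMeasurable]

lemma integral_exp_sum_eq_prod {Ω ι : Type*} [MeasurableSpace Ω] (P : Measure Ω)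
    [IsProbabilityMeasure P] {X : ι → Ω → ℝ} (hmeas : ∀ i, Measurable (X i))
    (hind : iIndepFun X P) (b : ι → ℝ) (s : Finset ι) :
    ∫ ω, Complex.exp (Complex.I * ((∑ i ∈ s, b i * X i ω : ℝ) : ℂ)) ∂P
      = ∏ i ∈ s, ∫ ω, Complex.exp (Complex.I * ((b i * X i ω : ℝ) : ℂ)) ∂P := by
  classical
  induction s using Finset.induction_on with
  | empty => simp
  | @insert j u hj ih =>
    set Y : ι → Ω → ℝ := fun i ω => b i * X i ω with hYdef
    have hYmeas : ∀ i, Measurable (Y i) := fun i => measurable_const.mul (hmeas i)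
    have hYind : iIndepFun Y P :=
      hind.comp (fun i x => b i * x) (fun i => measurable_const.mul measurable_id)
    have hsum : (∑ k ∈ u, Y k) = fun ω => ∑ k ∈ u, Y k ω := by
      funext ω; simp
    have hindep : IndepFun (fun ω => ∑ k ∈ u, Y k ω) (Y j) P := by
      have h := hYind.indepFun_finsetSum_of_notMem hYmeas hj
      rwa [hsum] at h
    have hWm : Measurable fun ω => ∑ k ∈ u, Y k ω :=
      Finset.measurable_sum u fun k _ => hYmeas k
    have hexp : Measurable fun x : ℝ => Complex.exp (Complex.I * (x : ℂ)) :=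
      Complex.measurable_exp.comp (measurable_const.mul Complex.measurable_ofReal)
    have step : ∀ ω, Complex.exp (Complex.I * ((∑ i ∈ insert j u, b i * X i ω : ℝ) : ℂ))
        = Complex.exp (Complex.I * ((∑ i ∈ u, b i * X i ω : ℝ) : ℂ))
          * Complex.exp (Complex.I * ((b j * X j ω : ℝ) : ℂ)) := by
      intro ω
      rw [Finset.sum_insert hj, Complex.ofReal_add, mul_add, Complex.exp_add]
      exact mul_comm _ _
    simp_rw [step]
    have h2 : ∫ ω, Complex.exp (Complex.I * ((∑ i ∈ u, b i * X i ω : ℝ) : ℂ))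
          * Complex.exp (Complex.I * ((b j * X j ω : ℝ) : ℂ)) ∂P
        = (∫ ω, Complex.exp (Complex.I * ((∑ i ∈ u, b i * X i ω : ℝ) : ℂ)) ∂P)
          * ∫ ω, Complex.exp (Complex.I * ((b j * X j ω : ℝ) : ℂ)) ∂P :=
      pair_integral_mul_cexp (W := fun ω => ∑ k ∈ u, Y k ω) (V := Y j)
        (f := fun x : ℝ => Complex.exp (Complex.I * (x : ℂ)))
        (g := fun x : ℝ => Complex.exp (Complex.I * (x : ℂ)))
        hWm (hYmeas j) hindep hexp hexp
    rw [h2, ih, Finset.prod_insert hj]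
    exact mul_comm _ _

lemma abs_prod_sub_prod {ι : Type*} (s : Finset ι) (x y : ι → ℂ)
    (hx : ∀ i ∈ s, ‖x i‖ ≤ 1) (hy : ∀ i ∈ s, ‖y i‖ ≤ 1) :
    ‖∏ i ∈ s, x i - ∏ i ∈ s, y i‖ ≤ ∑ i ∈ s, ‖x i - y i‖ := by
  classical
  induction s using Finset.induction_on with
  | empty => simp
  | @insert j u hj ih =>
    rw [Finset.prod_insert hj, Finset.prod_insert hj, Finset.sum_insert hj]
    have key : x j * ∏ i ∈ u, x i - y j * ∏ i ∈ u, y i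
        = x j * (∏ i ∈ u, x i - ∏ i ∈ u, y i) + (x j - y j) * ∏ i ∈ u, y i := by ring
    rw [key]
    refine (norm_add_le _ _).trans ?_
    rw [norm_mul, norm_mul]
    have h1 : ‖x j‖ ≤ 1 := hx j (Finset.mem_insert_self _ _)
    have h2 : ‖∏ i ∈ u, y i‖ ≤ 1 := by
      rw [norm_prod]
      exact Finset.prod_le_one (fun i _ => norm_nonneg _)
        (fun i hi => hy i (Finset.mem_insert_of_mem hi))
    have h3 := ih (fun i hi => hx i (Finset.mem_insert_of_mem hi))
      (fun i hi => hy i (Finset.mem_insert_of_mem hi))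
    calc ‖x j‖ * ‖∏ i ∈ u, x i - ∏ i ∈ u, y i‖
          + ‖x j - y j‖ * ‖∏ i ∈ u, y i‖
        ≤ 1 * (∑ i ∈ u, ‖x i - y i‖) + ‖x j - y j‖ * 1 := by
          gcongr
      _ = ‖x j - y j‖ + ∑ i ∈ u, ‖x i - y i‖ := by ring

lemma abs_charFn_le_one (μ : Measure ℝ) [IsProbabilityMeasure μ] (s : ℝ) :
    ‖charFn μ s‖ ≤ 1 := by
  rw [charFn]
  calc ‖∫ x, Complex.exp (Complex.I * (s * x)) ∂μ‖
      ≤ ∫ x, ‖Complex.exp (Complex.I * (s * x))‖ ∂μ := norm_integral_le_integral_norm _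
    _ = 1 := by
      have h : ∀ x : ℝ, ‖Complex.exp (Complex.I * (s * x : ℂ))‖ = 1 := by
        intro x
        rw [Complex.norm_exp]
        simp
      simp only [h]
      simp

end AuxLemmas

/-- **Lemma 1.** Let `μ₁, μ₂ ∈ S(α, c)`, let `Z₁, …, Z_n` and `Z₁*, …, Z_n*` be i.i.d.
sequences with respective distributions `μ₁`, `μ₂`, let `(a₁, …, a_n) ∈ ℝⁿ`,
`A_n = (∑ |a_k|^α)^{1/α}`, `δ_n = max_k |a_k| / A_n`. Then for `|t| δ_n ≤ 1`,
`|E exp(it A_n⁻¹ ∑ a_k Z_k) - E exp(it A_n⁻¹ ∑ a_k Z_k*)| ≤ |t|^α ρ(μ₁, μ₂)`. -/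
theorem statement2
    {Ω : Type*} [MeasurableSpace Ω] (P : Measure Ω) [IsProbabilityMeasure P]
    (α c : ℝ) (hα : 0 < α) (hα2 : α < 2) (hc : 0 < c)
    (μ₁ μ₂ : Measure ℝ) (β₁ β₂ : ℝ → ℝ)
    (h1 : MemS α c μ₁) (h2 : MemS α c μ₂)
    (hβ₁ : IsAssocFn α c μ₁ β₁) (hβ₂ : IsAssocFn α c μ₂ β₂)
    (n : ℕ) (hn : 0 < n) (a : Fin n → ℝ)
    (Z Zstar : Fin n → Ω → ℝ)
    (hZmeas : ∀ i, Measurable (Z i))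
    (hZind : ProbabilityTheory.iIndepFun Z P)
    (hZlaw : ∀ i, P.map (Z i) = μ₁)
    (hZsmeas : ∀ i, Measurable (Zstar i))
    (hZsind : ProbabilityTheory.iIndepFun Zstar P)
    (hZslaw : ∀ i, P.map (Zstar i) = μ₂)
    (t : ℝ)
    (ht : |t| * ((Finset.univ.sup' (Finset.univ_nonempty_iff.mpr (Fin.pos_iff_nonempty.mp hn))
        fun i => |a i|) / (∑ i, |a i| ^ α) ^ (1 / α)) ≤ 1) :
    ‖((∫ ω, Complex.exp (Complex.I *
          ((t * (((∑ i, |a i| ^ α) ^ (1 / α))⁻¹ * ∑ i, a i * Z i ω) : ℝ))) ∂P) -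
        ∫ ω, Complex.exp (Complex.I *
          ((t * (((∑ i, |a i| ^ α) ^ (1 / α))⁻¹ * ∑ i, a i * Zstar i ω) : ℝ))) ∂P)‖
      ≤ |t| ^ α * rho β₁ β₂ := by
  have hP1 : IsProbabilityMeasure μ₁ := h1.1
  have hP2 : IsProbabilityMeasure μ₂ := h2.1
  obtain ⟨M₁, hM₁⟩ := hβ₁.bounded
  obtain ⟨M₂, hM₂⟩ := hβ₂.bounded
  have hbdd : BddAbove (Set.range fun u : {t : ℝ // |t| ≤ 1} => |β₁ u.1 - β₂ u.1|) := by
    refine ⟨M₁ + M₂, ?_⟩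
    rintro _ ⟨u, rfl⟩
    exact (abs_sub _ _).trans (add_le_add (hM₁ _) (hM₂ _))
  set S₁ : ℝ := ⨆ u : {t : ℝ // |t| ≤ 1}, |β₁ u.1 - β₂ u.1| with hS₁def
  have hS₁nonneg : 0 ≤ S₁ :=
    le_trans (abs_nonneg _) (le_ciSup hbdd ⟨0, by simp⟩)
  have hT : 0 ≤ ∑' k : ℕ, (2 ^ k : ℝ)⁻¹ *
      ⨆ t : {t : ℝ // 2 ^ k ≤ |t| ∧ |t| ≤ 2 ^ (k + 1)}, |β₁ t.1 - β₂ t.1| :=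
    tsum_nonneg fun k => mul_nonneg (by positivity) (Real.iSup_nonneg fun u => abs_nonneg _)
  have hS₁rho : S₁ ≤ rho β₁ β₂ := le_add_of_nonneg_right hT
  have hrho0 : 0 ≤ rho β₁ β₂ := le_trans hS₁nonneg hS₁rho
  set S : ℝ := ∑ i, |a i| ^ α with hSdef
  have hS0 : 0 ≤ S := Finset.sum_nonneg fun i _ => Real.rpow_nonneg (abs_nonneg _) _
  set A : ℝ := S ^ (1 / α) with hAdef
  by_cases hS : S = 0
  · have hA0 : A = 0 := by
      rw [hAdef, hS, Real.zero_rpow (one_div_ne_zero hα.ne')]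
    simp only [hA0, inv_zero, zero_mul, mul_zero, Complex.ofReal_zero, Complex.exp_zero,
      integral_const, probReal_univ, one_smul, sub_self, norm_zero]
    exact mul_nonneg (Real.rpow_nonneg (abs_nonneg t) α) hrho0
  · have hSpos : 0 < S := lt_of_le_of_ne hS0 (Ne.symm hS)
    have hApos : 0 < A := Real.rpow_pos_of_pos hSpos _
    set b : Fin n → ℝ := fun i => t * A⁻¹ * a i with hbdef
    have hrwZ : ∀ ω, t * (A⁻¹ * ∑ i, a i * Z i ω) = ∑ i, b i * Z i ω := by
      intro ω
      rw [Finset.mul_sum, Finset.mul_sum]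
      exact Finset.sum_congr rfl fun i _ => by rw [hbdef]; ring
    have hrwZs : ∀ ω, t * (A⁻¹ * ∑ i, a i * Zstar i ω) = ∑ i, b i * Zstar i ω := by
      intro ω
      rw [Finset.mul_sum, Finset.mul_sum]
      exact Finset.sum_congr rfl fun i _ => by rw [hbdef]; ring
    simp only [hrwZ, hrwZs]
    rw [integral_exp_sum_eq_prod P hZmeas hZind b Finset.univ,
      integral_exp_sum_eq_prod P hZsmeas hZsind b Finset.univ]
    have hfZ : ∀ i, charFn μ₁ (b i)
        = ∫ ω, Complex.exp (Complex.I * ((b i * Z i ω : ℝ) : ℂ)) ∂P := by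
      intro i
      rw [charFn, ← hZlaw i,
        integral_map (hZmeas i).aemeasurable (by exact (Complex.measurable_exp.comp (measurable_const.mul (measurable_const.mul Complex.measurable_ofReal))).aestronglyMeasurable)]
      simp [Complex.ofReal_mul]
    have hfZs : ∀ i, charFn μ₂ (b i)
        = ∫ ω, Complex.exp (Complex.I * ((b i * Zstar i ω : ℝ) : ℂ)) ∂P := by
      intro i
      rw [charFn, ← hZslaw i,
        integral_map (hZsmeas i).aemeasurable (by exact (Complex.measurable_exp.comp (measurable_const.mul (measurable_const.mul Complex.measurable_ofReal))).aestronglyMeasurable)]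
      simp [Complex.ofReal_mul]
    simp only [← hfZ, ← hfZs]
    -- bound on |b i|
    have hb1 : ∀ i, |b i| ≤ 1 := by
      intro i
      have hMle : |a i| ≤ Finset.univ.sup'
          (Finset.univ_nonempty_iff.mpr (Fin.pos_iff_nonempty.mp hn)) fun i => |a i| :=
        Finset.le_sup' (fun i => |a i|) (Finset.mem_univ i)
      calc |b i| = |t| * A⁻¹ * |a i| := by
            rw [hbdef, abs_mul, abs_mul, abs_of_nonneg (inv_nonneg.mpr hApos.le)]
        _ ≤ |t| * A⁻¹ * (Finset.univ.sup'
              (Finset.univ_nonempty_iff.mpr (Fin.pos_iff_nonempty.mp hn)) fun i => |a i|) := by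
            gcongr
        _ = |t| * ((Finset.univ.sup'
              (Finset.univ_nonempty_iff.mpr (Fin.pos_iff_nonempty.mp hn)) fun i => |a i|) / A) := by
            rw [div_eq_mul_inv]; ring
        _ ≤ 1 := ht
    have habsdiff : ∀ i, ‖charFn μ₁ (b i) - charFn μ₂ (b i)‖
        = |β₁ (b i) - β₂ (b i)| * |b i| ^ α := by
      intro i
      rw [hβ₁.eq, hβ₂.eq, ← Complex.ofReal_sub, Complex.norm_real, Real.norm_eq_abs,
        show (1 - c * |b i| ^ α + β₁ (b i) * |b i| ^ α)
            - (1 - c * |b i| ^ α + β₂ (b i) * |b i| ^ α)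
          = (β₁ (b i) - β₂ (b i)) * |b i| ^ α from by ring,
        abs_mul, abs_of_nonneg (Real.rpow_nonneg (abs_nonneg _) α)]
    have hbpow : ∀ i, |b i| ^ α = |t| ^ α * (S⁻¹ * |a i| ^ α) := by
      intro i
      have h1 : |b i| = |t| * (A⁻¹ * |a i|) := by
        rw [hbdef, abs_mul, abs_mul, abs_of_nonneg (inv_nonneg.mpr hApos.le), mul_assoc]
      have hAα : A ^ α = S := by
        rw [hAdef, ← Real.rpow_mul hS0, one_div_mul_cancel hα.ne', Real.rpow_one]
      rw [h1, Real.mul_rpow (abs_nonneg t) (mul_nonneg (inv_nonneg.mpr hApos.le) (abs_nonneg _)),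
        Real.mul_rpow (inv_nonneg.mpr hApos.le) (abs_nonneg _),
        Real.inv_rpow hApos.le, hAα]
    calc ‖(∏ i, charFn μ₁ (b i)) - ∏ i, charFn μ₂ (b i)‖
        ≤ ∑ i, ‖charFn μ₁ (b i) - charFn μ₂ (b i)‖ :=
          abs_prod_sub_prod Finset.univ _ _ (fun i _ => abs_charFn_le_one μ₁ (b i))
            (fun i _ => abs_charFn_le_one μ₂ (b i))
      _ ≤ ∑ i, S₁ * |b i| ^ α := by
          refine Finset.sum_le_sum fun i _ => ?_
          rw [habsdiff i]
          exact mul_le_mul_of_nonneg_right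
            (le_ciSup hbdd ⟨b i, hb1 i⟩) (Real.rpow_nonneg (abs_nonneg _) _)
      _ = S₁ * |t| ^ α := by
          simp_rw [hbpow]
          rw [← Finset.mul_sum, ← Finset.mul_sum, ← Finset.mul_sum, ← hSdef,
            inv_mul_cancel₀ hSpos.ne', mul_one]
      _ ≤ rho β₁ β₂ * |t| ^ α :=
          mul_le_mul_of_nonneg_right hS₁rho (Real.rpow_nonneg (abs_nonneg _) _)
      _ = |t| ^ α * rho β₁ β₂ := mul_comm _ _
end

section
/- Let 0 < α < 2, c > 0, and let μ₁, μ₂ ∈ S(α, c) with associated functions β₁, β₂. Let Z₁, …, Z_n be i.i.d. with distribution μ₁ and Z₁*, …, Z_n* be i.i.d. with distribution μ₂. Let (a₁, …, a_n) ∈ ℝⁿ, A_n = (Σ_{k=1}^n |a_k|^α)^{1/α}, and δ_n = max_{1≤k≤n} |a_k| / A_n. Then for every t ∈ ℝ one has |E exp(i t A_n^{-1} Σ_{k=1}^n a_k Z_k) − E exp(i t A_n^{-1} Σ_{k=1}^n a_k Z_k*)| ≤ |t|^α · sup_{|x| ≤ |t|δ_n} |β₁(x) − β₂(x)|. -/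
open MeasureTheory Filter Finset
open scoped Topology BoundedContinuousFunction ENNReal

namespace Statement3Aux
open ProbabilityTheory

lemma aux_indep_integral_mul {Ω : Type*} [MeasurableSpace Ω] {P : Measure Ω}
    [IsProbabilityMeasure P] {f g : Ω → ℂ}
    (h : IndepFun f g P) (hf : Measurable f) (hg : Measurable g)
    (hfb : ∀ ω, ‖f ω‖ ≤ 1) (hgb : ∀ ω, ‖g ω‖ ≤ 1) :
    ∫ ω, f ω * g ω ∂P = (∫ ω, f ω ∂P) * ∫ ω, g ω ∂P := by
  have bdd : ∀ (u : Ω → ℂ), Measurable u → (∀ ω, ‖u ω‖ ≤ 1) →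
      Integrable u P := fun u hu hub =>
    (integrable_const (1:ℝ)).mono' hu.aestronglyMeasurable (ae_of_all _ hub)
  have hfi : Integrable f P := bdd f hf hfb
  have hgi : Integrable g P := bdd g hg hgb
  have hfr : Integrable (fun ω => (f ω).re) P := by
    refine (integrable_const (1:ℝ)).mono' (Complex.measurable_re.comp hf).aestronglyMeasurable
      (ae_of_all _ fun ω => ?_)
    exact le_trans (by simpa using Complex.abs_re_le_norm (f ω)) (hfb ω)
  have hfi' : Integrable (fun ω => (f ω).im) P := by
    refine (integrable_const (1:ℝ)).mono' (Complex.measurable_im.comp hf).aestronglyMeasurable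
      (ae_of_all _ fun ω => ?_)
    exact le_trans (by simpa using Complex.abs_im_le_norm (f ω)) (hfb ω)
  have hgr : Integrable (fun ω => (g ω).re) P := by
    refine (integrable_const (1:ℝ)).mono' (Complex.measurable_re.comp hg).aestronglyMeasurable
      (ae_of_all _ fun ω => ?_)
    exact le_trans (by simpa using Complex.abs_re_le_norm (g ω)) (hgb ω)
  have hgi' : Integrable (fun ω => (g ω).im) P := by
    refine (integrable_const (1:ℝ)).mono' (Complex.measurable_im.comp hg).aestronglyMeasurable
      (ae_of_all _ fun ω => ?_)
    exact le_trans (by simpa using Complex.abs_im_le_norm (g ω)) (hgb ω)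
  have hind : ∀ (φ ψ : ℂ → ℝ), Measurable φ → Measurable ψ →
      IndepFun (fun ω => φ (f ω)) (fun ω => ψ (g ω)) P := fun φ ψ hφ hψ => h.comp hφ hψ
  have hmul : Integrable (fun ω => f ω * g ω) P := by
    refine (integrable_const (1:ℝ)).mono' (hf.mul hg).aestronglyMeasurable
      (ae_of_all _ fun ω => ?_)
    calc ‖f ω * g ω‖ = ‖f ω‖ * ‖g ω‖ := norm_mul _ _
    _ ≤ 1 * 1 := mul_le_mul (hfb ω) (hgb ω) (norm_nonneg _) zero_le_one
    _ = 1 := one_mul 1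
  have e1 := (hind _ _ Complex.measurable_re Complex.measurable_re).integral_mul_eq_mul_integral hfr.1 hgr.1
  have e2 := (hind _ _ Complex.measurable_im Complex.measurable_im).integral_mul_eq_mul_integral hfi'.1 hgi'.1
  have e3 := (hind _ _ Complex.measurable_re Complex.measurable_im).integral_mul_eq_mul_integral hfr.1 hgi'.1
  have e4 := (hind _ _ Complex.measurable_im Complex.measurable_re).integral_mul_eq_mul_integral hfi'.1 hgr.1
  simp only [Pi.mul_apply] at e1 e2 e3 e4
  have hre : ∀ (u : Ω → ℂ), Integrable u P → (∫ ω, u ω ∂P).re = ∫ ω, (u ω).re ∂P := by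
    intro u hu
    have := Complex.reCLM.integral_comp_comm hu
    simpa using this.symm
  have him : ∀ (u : Ω → ℂ), Integrable u P → (∫ ω, u ω ∂P).im = ∫ ω, (u ω).im ∂P := by
    intro u hu
    have := Complex.imCLM.integral_comp_comm hu
    simpa using this.symm
  have i1 : Integrable (fun ω => (f ω).re * (g ω).re) P :=
    (hind _ _ Complex.measurable_re Complex.measurable_re).integrable_mul hfr hgr
  have i2 : Integrable (fun ω => (f ω).im * (g ω).im) P :=
    (hind _ _ Complex.measurable_im Complex.measurable_im).integrable_mul hfi' hgi'
  have i3 : Integrable (fun ω => (f ω).re * (g ω).im) P :=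
    (hind _ _ Complex.measurable_re Complex.measurable_im).integrable_mul hfr hgi'
  have i4 : Integrable (fun ω => (f ω).im * (g ω).re) P :=
    (hind _ _ Complex.measurable_im Complex.measurable_re).integrable_mul hfi' hgr
  apply Complex.ext
  · rw [hre _ hmul, Complex.mul_re, hre _ hfi, hre _ hgi, him _ hfi, him _ hgi]
    simp only [Complex.mul_re]
    rw [integral_sub i1 i2, ← e1, ← e2]
  · rw [him _ hmul, Complex.mul_im, hre _ hfi, hre _ hgi, him _ hfi, him _ hgi]
    simp only [Complex.mul_im]
    rw [integral_add i3 i4, ← e3, ← e4]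

lemma aux_charfun_prod {Ω : Type*} [MeasurableSpace Ω] {P : Measure Ω}
    [IsProbabilityMeasure P] {n : ℕ} {Z : Fin n → Ω → ℝ}
    (hZmeas : ∀ i, Measurable (Z i))
    (hZind : iIndepFun Z P) (b : Fin n → ℝ) (s : Finset (Fin n)) :
    ∫ ω, Complex.exp (Complex.I * ((∑ i ∈ s, b i * Z i ω : ℝ) : ℂ)) ∂P
      = ∏ i ∈ s, ∫ ω, Complex.exp (Complex.I * ((b i * Z i ω : ℝ) : ℂ)) ∂P := by
  set g : Fin n → Ω → ℂ := fun i ω => Complex.exp (Complex.I * ((b i * Z i ω : ℝ) : ℂ)) with hg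
  have hgmeas : ∀ i, Measurable (g i) := by
    intro i
    exact Complex.measurable_exp.comp <| measurable_const.mul <|
      Complex.measurable_ofReal.comp <| measurable_const.mul (hZmeas i)
  have hgnorm : ∀ i ω, ‖g i ω‖ = 1 := by
    intro i ω
    simp [hg, Complex.norm_exp, mul_comm]
  have hgind : iIndepFun g P := by
    have := hZind.comp (fun i (x : ℝ) => Complex.exp (Complex.I * (b i * x : ℝ)))
      (fun i => Complex.measurable_exp.comp <| measurable_const.mul <|
        Complex.measurable_ofReal.comp <| measurable_const.mul measurable_id)
    exact this
  have key : ∀ s : Finset (Fin n), ∫ ω, ∏ i ∈ s, g i ω ∂P = ∏ i ∈ s, ∫ ω, g i ω ∂P := by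
    intro s
    induction s using Finset.induction_on with
    | empty => simp
    | @insert j s hj ih =>
      have hindep : IndepFun (∏ i ∈ s, g i) (g j) P :=
        hgind.indepFun_finsetProd_of_notMem hgmeas hj
      have hprodmeas : Measurable (∏ i ∈ s, g i) := by
        rw [show (∏ i ∈ s, g i) = fun ω => ∏ i ∈ s, g i ω from funext fun ω => by
          simp [Finset.prod_apply]]
        exact Finset.measurable_prod s fun i _ => hgmeas i
      have hprodnorm : ∀ ω, ‖(∏ i ∈ s, g i) ω‖ ≤ 1 := by
        intro ω
        simp only [Finset.prod_apply]
        calc ‖∏ i ∈ s, g i ω‖ = ∏ i ∈ s, ‖g i ω‖ := norm_prod _ _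
        _ = 1 := by simp [hgnorm]
        _ ≤ 1 := le_rfl
      rw [Finset.prod_insert hj, ← ih]
      have := aux_indep_integral_mul hindep.symm (hgmeas j) hprodmeas
        (fun ω => (hgnorm j ω).le) hprodnorm
      simp only [Finset.prod_apply] at this
      rw [← this]
      congr 1
      ext ω
      rw [Finset.prod_insert hj]
  have := key s
  rw [← this]
  congr 1
  ext ω
  rw [show ((∑ i ∈ s, b i * Z i ω : ℝ) : ℂ) = ∑ i ∈ s, ((b i * Z i ω : ℝ) : ℂ) by push_cast; ring,
    Finset.mul_sum, Complex.exp_sum]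

lemma aux_prod_sub_prod {ι : Type*} [DecidableEq ι] (s : Finset ι) (x y : ι → ℂ)
    (hx : ∀ i, ‖x i‖ ≤ 1) (hy : ∀ i, ‖y i‖ ≤ 1) :
    ‖∏ i ∈ s, x i - ∏ i ∈ s, y i‖ ≤ ∑ i ∈ s, ‖x i - y i‖ := by
  induction s using Finset.induction_on with
  | empty => simp
  | @insert j s hj ih =>
    rw [Finset.prod_insert hj, Finset.prod_insert hj, Finset.sum_insert hj]
    have key : x j * ∏ i ∈ s, x i - y j * ∏ i ∈ s, y i
        = (x j - y j) * ∏ i ∈ s, y i + x j * (∏ i ∈ s, x i - ∏ i ∈ s, y i) := by ring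
    rw [key]
    calc ‖_‖ ≤ ‖(x j - y j) * ∏ i ∈ s, y i‖
          + ‖x j * (∏ i ∈ s, x i - ∏ i ∈ s, y i)‖ := norm_add_le _ _
      _ ≤ ‖x j - y j‖ * 1 + 1 * ∑ i ∈ s, ‖x i - y i‖ := by
          rw [norm_mul, norm_mul]
          gcongr
          · calc ‖∏ i ∈ s, y i‖ = ∏ i ∈ s, ‖y i‖ := norm_prod _ _
              _ ≤ ∏ i ∈ s, 1 := Finset.prod_le_prod (fun i _ => norm_nonneg _)
                  (fun i _ => hy i)
              _ = 1 := Finset.prod_const_one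
          · exact hx j
      _ = ‖x j - y j‖ + ∑ i ∈ s, ‖x i - y i‖ := by ring

lemma aux_charFn_abs_le {μ : Measure ℝ} [IsProbabilityMeasure μ] (s : ℝ) :
    ‖charFn μ s‖ ≤ 1 := by
  have := norm_integral_le_of_norm_le_const (μ := μ)
    (f := fun x : ℝ => Complex.exp (Complex.I * (s * x))) (C := 1) ?_
  · simpa [charFn] using this
  · refine ae_of_all _ fun x => ?_
    rw [Complex.norm_exp]
    simp

lemma aux_charFn_map {Ω : Type*} [MeasurableSpace Ω] {P : Measure Ω}
    {Z : Ω → ℝ} (hZ : Measurable Z) (s : ℝ) :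
    charFn (P.map Z) s = ∫ ω, Complex.exp (Complex.I * ((s * Z ω : ℝ) : ℂ)) ∂P := by
  rw [charFn, integral_map hZ.aemeasurable]
  · push_cast
    rfl
  · exact (Complex.measurable_exp.comp <| measurable_const.mul <|
      (Complex.measurable_ofReal.comp measurable_id).const_mul _).aestronglyMeasurable


end Statement3Aux

/-- **Remark after Lemma 1.** With the notation of Lemma 1, for any `t ∈ ℝ`,
`|E exp(it A_n⁻¹ ∑ a_k Z_k) - E exp(it A_n⁻¹ ∑ a_k Z_k*)| ≤ |t|^α sup_{|x| ≤ |t|δ_n} |β₁(x) - β₂(x)|`. -/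
theorem statement3
    {Ω : Type*} [MeasurableSpace Ω] (P : Measure Ω) [IsProbabilityMeasure P]
    (α c : ℝ) (hα : 0 < α) (hα2 : α < 2) (hc : 0 < c)
    (μ₁ μ₂ : Measure ℝ) (β₁ β₂ : ℝ → ℝ)
    (h1 : MemS α c μ₁) (h2 : MemS α c μ₂)
    (hβ₁ : IsAssocFn α c μ₁ β₁) (hβ₂ : IsAssocFn α c μ₂ β₂)
    (n : ℕ) (hn : 0 < n) (a : Fin n → ℝ)
    (Z Zstar : Fin n → Ω → ℝ)
    (hZmeas : ∀ i, Measurable (Z i))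
    (hZind : ProbabilityTheory.iIndepFun Z P)
    (hZlaw : ∀ i, P.map (Z i) = μ₁)
    (hZsmeas : ∀ i, Measurable (Zstar i))
    (hZsind : ProbabilityTheory.iIndepFun Zstar P)
    (hZslaw : ∀ i, P.map (Zstar i) = μ₂)
    (t : ℝ) :
    ‖((∫ ω, Complex.exp (Complex.I *
          ((t * (((∑ i, |a i| ^ α) ^ (1 / α))⁻¹ * ∑ i, a i * Z i ω) : ℝ))) ∂P) -
        ∫ ω, Complex.exp (Complex.I *
          ((t * (((∑ i, |a i| ^ α) ^ (1 / α))⁻¹ * ∑ i, a i * Zstar i ω) : ℝ))) ∂P)‖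
      ≤ |t| ^ α *
        ⨆ x : {x : ℝ // |x| ≤ |t| *
          ((Finset.univ.sup' (Finset.univ_nonempty_iff.mpr (Fin.pos_iff_nonempty.mp hn))
            fun i => |a i|) / (∑ i, |a i| ^ α) ^ (1 / α))}, |β₁ x.1 - β₂ x.1| := by
  haveI hμ₁ : IsProbabilityMeasure μ₁ := h1.1
  haveI hμ₂ : IsProbabilityMeasure μ₂ := h2.1
  open Statement3Aux in
  set S : ℝ := ∑ i, |a i| ^ α with hS
  set A : ℝ := S ^ (1 / α) with hA
  set M : ℝ := Finset.univ.sup' (Finset.univ_nonempty_iff.mpr (Fin.pos_iff_nonempty.mp hn))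
    fun i => |a i| with hM
  have hSnn : 0 ≤ S := Finset.sum_nonneg fun i _ => Real.rpow_nonneg (abs_nonneg _) _
  have hMnn : 0 ≤ M := le_trans (abs_nonneg (a ⟨0, hn⟩)) (Finset.le_sup' (fun i => |a i|) (Finset.mem_univ ⟨0, hn⟩))
  have hRnn : 0 ≤ |t| * (M / A) := by
    apply mul_nonneg (abs_nonneg _)
    apply div_nonneg hMnn
    exact Real.rpow_nonneg hSnn _
  -- the sup is over a nonempty type and bounded above
  haveI hne : Nonempty {x : ℝ // |x| ≤ |t| * (M / A)} := ⟨⟨0, by simpa using hRnn⟩⟩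
  obtain ⟨M₁, hM₁⟩ := hβ₁.bounded
  obtain ⟨M₂, hM₂⟩ := hβ₂.bounded
  have hbdd : BddAbove (Set.range fun x : {x : ℝ // |x| ≤ |t| * (M / A)} => |β₁ x.1 - β₂ x.1|) := by
    refine ⟨M₁ + M₂, ?_⟩
    rintro r ⟨x, rfl⟩
    exact le_trans (abs_sub _ _) (add_le_add (hM₁ _) (hM₂ _))
  have hsupnn : 0 ≤ ⨆ x : {x : ℝ // |x| ≤ |t| * (M / A)}, |β₁ x.1 - β₂ x.1| :=
    le_ciSup_of_le hbdd ⟨0, by simpa using hRnn⟩ (abs_nonneg _)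
  by_cases hS0 : S = 0
  · -- all aᵢ = 0
    have hA0 : A = 0 := by
      rw [hA, hS0, Real.zero_rpow (by positivity)]
    rw [hA0] at hsupnn ⊢
    simp only [inv_zero, zero_mul, mul_zero, Complex.ofReal_zero, Complex.exp_zero,
      integral_const, measure_univ, ENNReal.toReal_one, one_smul, sub_self, norm_zero]
    exact mul_nonneg (Real.rpow_nonneg (abs_nonneg _) _) hsupnn
  have hSpos : 0 < S := lt_of_le_of_ne hSnn (Ne.symm hS0)
  have hApos : 0 < A := Real.rpow_pos_of_pos hSpos _
  set b : Fin n → ℝ := fun i => t * A⁻¹ * a i with hb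
  have hrw : ∀ (W : Fin n → Ω → ℝ) (ω : Ω),
      t * (A⁻¹ * ∑ i, a i * W i ω) = ∑ i, b i * W i ω := by
    intro W ω
    rw [Finset.mul_sum, Finset.mul_sum]
    exact Finset.sum_congr rfl fun i _ => by rw [hb]; ring
  have key1 : (∫ ω, Complex.exp (Complex.I *
      ((t * (A⁻¹ * ∑ i, a i * Z i ω) : ℝ))) ∂P) = ∏ i, charFn μ₁ (b i) := by
    have : ∀ ω, ((t * (A⁻¹ * ∑ i, a i * Z i ω) : ℝ) : ℂ)
        = ((∑ i, b i * Z i ω : ℝ) : ℂ) := fun ω => by rw [hrw]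
    simp_rw [this]
    rw [aux_charfun_prod hZmeas hZind b Finset.univ]
    exact Finset.prod_congr rfl fun i _ => by rw [← hZlaw i, aux_charFn_map (hZmeas i)]
  have key2 : (∫ ω, Complex.exp (Complex.I *
      ((t * (A⁻¹ * ∑ i, a i * Zstar i ω) : ℝ))) ∂P) = ∏ i, charFn μ₂ (b i) := by
    have : ∀ ω, ((t * (A⁻¹ * ∑ i, a i * Zstar i ω) : ℝ) : ℂ)
        = ((∑ i, b i * Zstar i ω : ℝ) : ℂ) := fun ω => by rw [hrw]
    simp_rw [this]
    rw [aux_charfun_prod hZsmeas hZsind b Finset.univ]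
    exact Finset.prod_congr rfl fun i _ => by rw [← hZslaw i, aux_charFn_map (hZsmeas i)]
  rw [key1, key2]
  calc ‖∏ i, charFn μ₁ (b i) - ∏ i, charFn μ₂ (b i)‖
      ≤ ∑ i, ‖charFn μ₁ (b i) - charFn μ₂ (b i)‖ :=
        aux_prod_sub_prod Finset.univ _ _ (fun i => aux_charFn_abs_le _)
          (fun i => aux_charFn_abs_le _)
    _ = ∑ i, |β₁ (b i) - β₂ (b i)| * |b i| ^ α := by
        refine Finset.sum_congr rfl fun i _ => ?_
        rw [hβ₁.eq, hβ₂.eq]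
        rw [show ((1 - c * |b i| ^ α + β₁ (b i) * |b i| ^ α : ℝ) : ℂ)
            - ((1 - c * |b i| ^ α + β₂ (b i) * |b i| ^ α : ℝ) : ℂ)
            = (((β₁ (b i) - β₂ (b i)) * |b i| ^ α : ℝ) : ℂ) by push_cast; ring]
        rw [Complex.norm_real, Real.norm_eq_abs, abs_mul, abs_of_nonneg (Real.rpow_nonneg (abs_nonneg _) _)]
    _ ≤ ∑ i, (⨆ x : {x : ℝ // |x| ≤ |t| * (M / A)}, |β₁ x.1 - β₂ x.1|) * |b i| ^ α := by
        refine Finset.sum_le_sum fun i _ => ?_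
        refine mul_le_mul_of_nonneg_right ?_ (Real.rpow_nonneg (abs_nonneg _) _)
        have hbi : |b i| ≤ |t| * (M / A) := by
          rw [hb]
          simp only [abs_mul, abs_inv]
          rw [abs_of_pos hApos, div_eq_mul_inv, ← mul_assoc, mul_right_comm (|t|)]
          exact mul_le_mul_of_nonneg_right
            (mul_le_mul_of_nonneg_left (Finset.le_sup' (fun j => |a j|) (Finset.mem_univ i)) (abs_nonneg t))
            (inv_nonneg.mpr hApos.le)
        exact le_ciSup hbdd ⟨b i, hbi⟩
    _ = (⨆ x : {x : ℝ // |x| ≤ |t| * (M / A)}, |β₁ x.1 - β₂ x.1|) * ∑ i, |b i| ^ α := by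
        rw [Finset.mul_sum]
    _ = |t| ^ α * ⨆ x : {x : ℝ // |x| ≤ |t| * (M / A)}, |β₁ x.1 - β₂ x.1| := by
        rw [mul_comm]
        congr 1
        have : ∀ i, |b i| ^ α = |t| ^ α * (A⁻¹) ^ α * |a i| ^ α := by
          intro i
          rw [hb, abs_mul, abs_mul, abs_inv, abs_of_pos hApos,
            Real.mul_rpow (by positivity) (abs_nonneg _),
            Real.mul_rpow (abs_nonneg _) (by positivity)]
        simp_rw [this]
        rw [← Finset.mul_sum, ← hS]
        have hAS : A ^ α = S := by
          rw [hA, ← Real.rpow_mul hSnn, one_div_mul_cancel hα.ne', Real.rpow_one]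
        rw [Real.inv_rpow hApos.le, hAS, mul_assoc, inv_mul_cancel₀ hS0, mul_one]
end

section
/- Let (S, d) be a separable metric space and let ν, ν₁, ν₂, … be probability measures on the Borel sets of (S, d) such that ν_n → ν weakly. Let 𝓖 be a class of real-valued functions on S such that: (a) 𝓖 is locally equicontinuous, i.e. for every ε > 0 and x ∈ S there is δ = δ(ε, x) > 0 such that y ∈ S and d(x, y) ≤ δ imply |f(x) − f(y)| ≤ ε for every f ∈ 𝓖; and (b) there exists a continuous function g ≥ 0 on S such that |f(x)| ≤ g(x) for all f ∈ 𝓖 and x ∈ S, and ∫_S g dν_n → ∫_S g dν < ∞. Then ∫_S f dν_n → ∫_S f dν as n → ∞, uniformly in f ∈ 𝓖. -/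
open MeasureTheory Filter
open scoped Topology BoundedContinuousFunction

/-- **Lemma 3 (Ranga Rao).** Let `(S, d)` be a separable metric space, `ν, ν₁, ν₂, …`
probability measures on the Borel sets of `S` with `ν_n → ν` weakly. Let `𝓖` be a class of
real functions on `S` which is locally equicontinuous and dominated by a continuous `g ≥ 0`
with `∫ g dν_n → ∫ g dν < ∞`. Then `∫ f dν_n → ∫ f dν` uniformly in `f ∈ 𝓖`. -/
theorem statement4
    {S : Type*} [MetricSpace S] [TopologicalSpace.SeparableSpace S]
    [MeasurableSpace S] [BorelSpace S]
    (ν : Measure S) (νn : ℕ → Measure S)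
    [IsProbabilityMeasure ν] [∀ n, IsProbabilityMeasure (νn n)]
    (hweak : ∀ f : S →ᵇ ℝ,
      Tendsto (fun n => ∫ x, f x ∂(νn n)) atTop (𝓝 (∫ x, f x ∂ν)))
    (𝓖 : Set (S → ℝ))
    (hequi : ∀ ε > (0 : ℝ), ∀ x : S, ∃ δ > (0 : ℝ),
      ∀ y : S, dist x y ≤ δ → ∀ f ∈ 𝓖, |f x - f y| ≤ ε)
    (g : S → ℝ) (hgcont : Continuous g) (hg0 : ∀ x, 0 ≤ g x)
    (hdom : ∀ f ∈ 𝓖, ∀ x, |f x| ≤ g x)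
    (hgint : Integrable g ν) (hgintn : ∀ n, Integrable g (νn n))
    (hgconv : Tendsto (fun n => ∫ x, g x ∂(νn n)) atTop (𝓝 (∫ x, g x ∂ν))) :
    ∀ ε > (0 : ℝ), ∃ N : ℕ, ∀ n ≥ N, ∀ f ∈ 𝓖,
      |(∫ x, f x ∂(νn n)) - ∫ x, f x ∂ν| ≤ ε := by
  intro ε hε
  classical
  have hsc : SecondCountableTopology S := UniformSpace.secondCountable_of_separable S
  set ε' : ℝ := ε / 9 with hε'def
  have hε' : 0 < ε' := by positivity
  -- S is nonempty
  have hSne : Nonempty S := by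
    by_contra h
    rw [not_nonempty_iff] at h
    have h1 : ν Set.univ = 1 := measure_univ
    rw [Set.univ_eq_empty_iff.mpr h, measure_empty] at h1
    exact zero_ne_one h1
  -- members of 𝓖 are continuous
  have hfcont : ∀ f ∈ 𝓖, Continuous f := by
    intro f hf
    rw [Metric.continuous_iff]
    intro x εc hεc
    obtain ⟨δ, hδ, hδ'⟩ := hequi (εc / 2) (by positivity) x
    refine ⟨δ, hδ, fun y hy => ?_⟩
    rw [Real.dist_eq]
    have h := hδ' y (by rw [dist_comm]; exact hy.le) f hf
    calc |f y - f x| = |f x - f y| := abs_sub_comm _ _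
      _ ≤ εc / 2 := h
      _ < εc := by linarith
  -- and integrable
  have hfint : ∀ f ∈ 𝓖, ∀ (μ : Measure S), Integrable g μ → Integrable f μ := by
    intro f hf μ hgμ
    exact hgμ.mono' ((hfcont f hf).aestronglyMeasurable)
      (Filter.Eventually.of_forall fun x => by
        simpa [Real.norm_eq_abs] using hdom f hf x)
  -- choice of good radii
  have hrad : ∀ x : S, ∃ r : ℝ, 0 < r ∧
      (∀ y, dist x y < r → (∀ f ∈ 𝓖, |f x - f y| ≤ ε') ∧ |g x - g y| ≤ ε') ∧
      ν (frontier (Metric.ball x r)) = 0 := by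
    intro x
    obtain ⟨δ₁, hδ₁, h1⟩ := hequi ε' hε' x
    obtain ⟨δ₂, hδ₂, h2⟩ := Metric.continuous_iff.mp hgcont x ε' hε'
    obtain ⟨r, hr, hrnull⟩ := MeasureTheory.exists_null_frontier_thickening ν {x}
      (show (0 : ℝ) < min δ₁ δ₂ by positivity)
    refine ⟨r, hr.1, fun y hy => ⟨fun f hf =>
      h1 y (hy.le.trans (hr.2.le.trans (min_le_left _ _))) f hf, ?_⟩, ?_⟩
    · have h3 := h2 y (by rw [dist_comm]; exact hy.trans_le (hr.2.le.trans (min_le_right _ _)))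
      rw [Real.dist_eq] at h3
      rw [abs_sub_comm]
      exact h3.le
    · rwa [Metric.thickening_singleton] at hrnull
  choose r hr0 hrball hrnull using hrad
  -- countable subcover by these balls
  have hcover : ⋃ x : S, Metric.ball x (r x) = Set.univ := by
    ext y
    simp only [Set.mem_iUnion, Set.mem_univ, iff_true]
    exact ⟨y, Metric.mem_ball_self (hr0 y)⟩
  obtain ⟨T, hTc, hTeq⟩ := TopologicalSpace.isOpen_iUnion_countable
    (fun x => Metric.ball x (r x)) (fun x => Metric.isOpen_ball)
  have hTne : T.Nonempty := by
    rcases hSne with ⟨x₀⟩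
    by_contra h
    rw [Set.not_nonempty_iff_eq_empty] at h
    have hx : x₀ ∈ ⋃ x ∈ T, Metric.ball x (r x) := by
      rw [hTeq, hcover]; trivial
    simp [h] at hx
  obtain ⟨e, hT⟩ := hTc.exists_eq_range hTne
  set B : ℕ → Set S := fun k => Metric.ball (e k) (r (e k)) with hBdef
  have hBcover : ⋃ k, B k = Set.univ := by
    have h := hTeq
    rw [hT, Set.biUnion_range] at h
    rw [← hcover, ← h]
  set A : ℕ → Set S := fun k => B k \ ⋃ j ∈ Finset.range k, B j with hAdef
  set V : ℕ → Set S := fun K => ⋃ k ∈ Finset.range K, B k with hVdef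
  have hBmeas : ∀ k, MeasurableSet (B k) := fun k => Metric.isOpen_ball.measurableSet
  have hAmeas : ∀ k, MeasurableSet (A k) :=
    fun k => (hBmeas k).diff (Finset.measurableSet_biUnion _ fun j _ => hBmeas j)
  have hVmeas : ∀ K, MeasurableSet (V K) :=
    fun K => Finset.measurableSet_biUnion _ fun j _ => hBmeas j
  have hAsubB : ∀ k, A k ⊆ B k := fun k => Set.diff_subset
  have hAdisj : ∀ j k, j < k → Disjoint (A j) (A k) := by
    intro j k hjk
    refine Set.disjoint_left.mpr fun x hxj hxk => ?_
    exact hxk.2 (Set.mem_biUnion (Finset.mem_range.mpr hjk) (hAsubB j hxj))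
  have hApair : ∀ K : ℕ, Set.Pairwise ↑(Finset.range K) (Function.onFun Disjoint A) := by
    intro K i _ j _ hij
    rcases hij.lt_or_gt with h | h
    · exact hAdisj i j h
    · exact (hAdisj j i h).symm
  have hVA : ∀ K, V K = ⋃ k ∈ Finset.range K, A k := by
    intro K
    apply Set.Subset.antisymm
    · intro x hx
      rw [Set.mem_iUnion₂] at hx
      obtain ⟨j, hj, hxj⟩ := hx
      have hex : ∃ m, x ∈ B m := ⟨j, hxj⟩
      have hm : x ∈ B (Nat.find hex) := Nat.find_spec hex
      have hmj : Nat.find hex ≤ j := Nat.find_le hxj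
      refine Set.mem_biUnion
        (Finset.mem_range.mpr (lt_of_le_of_lt hmj (Finset.mem_range.mp hj))) ?_
      refine ⟨hm, fun hxU => ?_⟩
      rw [Set.mem_iUnion₂] at hxU
      obtain ⟨i, hi, hxi⟩ := hxU
      exact Nat.find_min hex (Finset.mem_range.mp hi) hxi
    · exact Set.iUnion₂_mono fun k _ => hAsubB k
  have hmeasV : ∀ (μ : Measure S) (K : ℕ), μ (V K) = ∑ k ∈ Finset.range K, μ (A k) := by
    intro μ K
    rw [hVA K]
    exact measure_biUnion_finset (hApair K) fun k _ => hAmeas k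
  -- choose K with small tail
  have hVmono : Monotone V := by
    intro a b hab x hx
    rw [Set.mem_iUnion₂] at hx ⊢
    obtain ⟨j, hj, hxj⟩ := hx
    exact ⟨j, Finset.mem_range.mpr (lt_of_lt_of_le (Finset.mem_range.mp hj) hab), hxj⟩
  have hVunion : ⋃ K, V K = Set.univ := by
    apply Set.Subset.antisymm (Set.subset_univ _)
    rw [← hBcover]
    refine Set.iUnion_subset fun k => ?_
    intro x hx
    exact Set.mem_iUnion.mpr ⟨k + 1, Set.mem_biUnion (Finset.self_mem_range_succ k) hx⟩
  have htendV : Tendsto (fun K => ∫ x in V K, g x ∂ν) atTop (𝓝 (∫ x, g x ∂ν)) := by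
    have h := MeasureTheory.tendsto_setIntegral_of_monotone hVmeas hVmono
      (by rw [hVunion]; exact hgint.integrableOn)
    rwa [hVunion, Measure.restrict_univ] at h
  obtain ⟨K₀, hK₀⟩ := Metric.tendsto_atTop.mp htendV ε' hε'
  set K : ℕ := K₀ with hKdef
  have hK : |(∫ x in V K, g x ∂ν) - ∫ x, g x ∂ν| < ε' := by
    rw [← Real.dist_eq]; exact hK₀ K₀ le_rfl
  set E : Set S := V K with hEdef
  have hEmeas : MeasurableSet E := hVmeas K
  have hEcompl : ∫ x in Eᶜ, g x ∂ν ≤ ε' := by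
    have hsplit : (∫ x in E, g x ∂ν) + ∫ x in Eᶜ, g x ∂ν = ∫ x, g x ∂ν :=
      integral_add_compl hEmeas hgint
    have h1 := (abs_lt.mp hK).1
    linarith
  -- dominating constant
  set D : ℝ := ∑ k ∈ Finset.range K, g (e k) with hDdef
  have hD0 : 0 ≤ D := Finset.sum_nonneg fun k _ => hg0 _
  set η : ℝ := ε' / (D + 1) with hηdef
  have hη0 : 0 < η := by positivity
  -- portmanteau
  have hAnull : ∀ k, ν (frontier (A k)) = 0 := by
    have hBnull : ∀ k, ν (frontier (B k)) = 0 := fun k => hrnull (e k)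
    have hfrontU : ∀ t : Finset ℕ, ν (frontier (⋃ j ∈ t, B j)) = 0 := by
      intro t
      induction t using Finset.induction_on with
      | empty => simp
      | @insert a t hat ih =>
        rw [Finset.set_biUnion_insert]
        exact measure_mono_null ((frontier_union_subset _ _).trans
          (Set.union_subset_union Set.inter_subset_left Set.inter_subset_right))
          (measure_union_null (hBnull a) ih)
    intro k
    have hsub : frontier (A k) ⊆ frontier (B k) ∪ frontier (⋃ j ∈ Finset.range k, B j) := by
      have hAeq : A k = B k ∩ (⋃ j ∈ Finset.range k, B j)ᶜ := Set.diff_eq _ _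
      rw [hAeq]
      refine (frontier_inter_subset _ _).trans ?_
      rw [frontier_compl]
      exact Set.union_subset_union Set.inter_subset_left Set.inter_subset_right
    exact measure_mono_null hsub (measure_union_null (hBnull k) (hfrontU _))
  have hAtend : ∀ k, Tendsto (fun n => ((νn n) (A k)).toReal) atTop (𝓝 ((ν (A k)).toReal)) := by
    intro k
    let P : ℕ → ProbabilityMeasure S := fun n => ⟨νn n, inferInstance⟩
    let Pl : ProbabilityMeasure S := ⟨ν, inferInstance⟩
    have hPtend : Tendsto P atTop (𝓝 Pl) := by
      rw [ProbabilityMeasure.tendsto_iff_forall_integral_tendsto]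
      intro f
      exact hweak f
    have h := ProbabilityMeasure.tendsto_measure_of_null_frontier_of_tendsto' hPtend (hAnull k)
    exact (ENNReal.tendsto_toReal (measure_ne_top ν (A k))).comp h
  -- eventual bounds
  have hev1 : ∀ᶠ n in atTop, |(∫ x, g x ∂(νn n)) - ∫ x, g x ∂ν| ≤ ε' := by
    obtain ⟨M, hM⟩ := Metric.tendsto_atTop.mp hgconv ε' hε'
    rw [Filter.eventually_atTop]
    exact ⟨M, fun m hm => by rw [← Real.dist_eq]; exact (hM m hm).le⟩
  have hev2 : ∀ᶠ n in atTop, ∀ k ∈ Finset.range K,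
      |((νn n) (A k)).toReal - (ν (A k)).toReal| ≤ η := by
    rw [Filter.eventually_all_finset]
    intro k _
    obtain ⟨M, hM⟩ := Metric.tendsto_atTop.mp (hAtend k) η hη0
    rw [Filter.eventually_atTop]
    exact ⟨M, fun m hm => by rw [← Real.dist_eq]; exact (hM m hm).le⟩
  obtain ⟨N, hN⟩ := Filter.eventually_atTop.mp (hev1.and hev2)
  refine ⟨N, fun n hn f hf => ?_⟩
  obtain ⟨hgdiff, hAdiff⟩ := hN n hn
  -- oscillation bounds on the pieces
  have hoscf : ∀ k, ∀ x ∈ A k, |f (e k) - f x| ≤ ε' := by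
    intro k x hx
    have hxB : dist (e k) x < r (e k) := by
      have := hAsubB k hx
      rw [hBdef] at this
      rw [dist_comm]
      exact this
    exact (hrball (e k) x hxB).1 f hf
  have hoscg : ∀ k, ∀ x ∈ A k, |g (e k) - g x| ≤ ε' := by
    intro k x hx
    have hxB : dist (e k) x < r (e k) := by
      have := hAsubB k hx
      rw [hBdef] at this
      rw [dist_comm]
      exact this
    exact (hrball (e k) x hxB).2
  -- sums of piece measures
  have hsum_le_one : ∀ (μ : Measure S) (_ : IsProbabilityMeasure μ),
      ∑ k ∈ Finset.range K, (μ (A k)).toReal ≤ 1 := by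
    intro μ hμ
    rw [← ENNReal.toReal_sum (fun k _ => measure_ne_top μ (A k)), ← hmeasV μ K]
    calc (μ (V K)).toReal ≤ (μ Set.univ).toReal :=
          ENNReal.toReal_mono (measure_ne_top μ _) (measure_mono (Set.subset_univ _))
      _ = 1 := by rw [measure_univ]; rfl
  -- key estimate over E
  have hkeyE : ∀ (μ : Measure S) (_ : IsProbabilityMeasure μ),
      ∀ F : S → ℝ, Integrable F μ → (∀ k, ∀ x ∈ A k, |F (e k) - F x| ≤ ε') →
      |(∫ x in E, F x ∂μ) - ∑ k ∈ Finset.range K, F (e k) * (μ (A k)).toReal| ≤ ε' := by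
    intro μ hμ F hFint hosc
    have hsplit : ∫ x in E, F x ∂μ = ∑ k ∈ Finset.range K, ∫ x in A k, F x ∂μ := by
      rw [hEdef, hVA K]
      exact integral_biUnion_finset _ (fun k _ => hAmeas k) (hApair K)
        (fun k _ => hFint.integrableOn)
    rw [hsplit, ← Finset.sum_sub_distrib]
    refine (Finset.abs_sum_le_sum_abs _ _).trans ?_
    have hterm : ∀ k ∈ Finset.range K,
        |(∫ x in A k, F x ∂μ) - F (e k) * (μ (A k)).toReal| ≤ ε' * (μ (A k)).toReal := by
      intro k _
      have h1 : ∫ x in A k, (F x - F (e k)) ∂μ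
          = (∫ x in A k, F x ∂μ) - F (e k) * (μ (A k)).toReal := by
        rw [integral_sub hFint.integrableOn (integrableOn_const (measure_ne_top μ _)),
          setIntegral_const, smul_eq_mul, mul_comm, Measure.real]
      rw [← h1]
      have h2 := norm_setIntegral_le_of_norm_le_const (μ := μ) (s := A k)
        (f := fun x => F x - F (e k)) (C := ε') (measure_lt_top μ _) ?_
      · simpa [Real.norm_eq_abs, Measure.real] using h2
      · intro x hx
        rw [Real.norm_eq_abs, abs_sub_comm]
        exact hosc k x hx
    refine (Finset.sum_le_sum hterm).trans ?_
    rw [← Finset.mul_sum]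
    calc ε' * ∑ k ∈ Finset.range K, (μ (A k)).toReal ≤ ε' * 1 :=
          mul_le_mul_of_nonneg_left (hsum_le_one μ hμ) hε'.le
      _ = ε' := mul_one _
  -- key full estimate
  have hkeyF : ∀ (μ : Measure S) (_ : IsProbabilityMeasure μ), Integrable g μ →
      ∀ F : S → ℝ, Integrable F μ → (∀ x, |F x| ≤ g x) →
      (∀ k, ∀ x ∈ A k, |F (e k) - F x| ≤ ε') →
      |(∫ x, F x ∂μ) - ∑ k ∈ Finset.range K, F (e k) * (μ (A k)).toReal|
        ≤ ε' + ∫ x in Eᶜ, g x ∂μ := by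
    intro μ hμ hgμ F hFint hFg hosc
    have hsplit : (∫ x in E, F x ∂μ) + ∫ x in Eᶜ, F x ∂μ = ∫ x, F x ∂μ :=
      integral_add_compl hEmeas hFint
    have h1 := hkeyE μ hμ F hFint hosc
    have h2 : |∫ x in Eᶜ, F x ∂μ| ≤ ∫ x in Eᶜ, g x ∂μ := by
      rw [← Real.norm_eq_abs]
      refine (norm_integral_le_integral_norm _).trans ?_
      refine setIntegral_mono_on hFint.integrableOn.norm hgμ.integrableOn hEmeas.compl ?_
      intro x _
      simpa [Real.norm_eq_abs] using hFg x
    have h3 := (abs_le.mp h1).1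
    have h4 := (abs_le.mp h1).2
    have h5 := (abs_le.mp h2).1
    have h6 := (abs_le.mp h2).2
    rw [abs_le]
    constructor <;> linarith
  -- sum difference bound
  have hsumdiff : ∀ F : S → ℝ, (∀ x, |F x| ≤ g x) →
      |(∑ k ∈ Finset.range K, F (e k) * ((νn n) (A k)).toReal)
        - ∑ k ∈ Finset.range K, F (e k) * (ν (A k)).toReal| ≤ ε' := by
    intro F hFg
    rw [← Finset.sum_sub_distrib]
    refine (Finset.abs_sum_le_sum_abs _ _).trans ?_
    have hterm : ∀ k ∈ Finset.range K,
        |F (e k) * ((νn n) (A k)).toReal - F (e k) * (ν (A k)).toReal| ≤ g (e k) * η := by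
      intro k hk
      rw [← mul_sub, abs_mul]
      exact mul_le_mul (hFg _) (hAdiff k hk) (abs_nonneg _) (hg0 _)
    refine (Finset.sum_le_sum hterm).trans ?_
    rw [← Finset.sum_mul]
    calc D * η = ε' * (D / (D + 1)) := by rw [hηdef]; ring
      _ ≤ ε' * 1 := mul_le_mul_of_nonneg_left
            ((div_le_one (by linarith)).mpr (by linarith)) hε'.le
      _ = ε' := mul_one _
  have habsg : ∀ x, |g x| ≤ g x := fun x => (abs_of_nonneg (hg0 x)).le
  -- lower bound on the sum for g under ν
  have hglow : ∫ x, g x ∂ν - 2 * ε' ≤ ∑ k ∈ Finset.range K, g (e k) * (ν (A k)).toReal := by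
    have h := hkeyF ν inferInstance hgint g hgint habsg hoscg
    have h1 := (abs_le.mp h).2
    linarith [hEcompl]
  -- upper bound on the tail of g under νn n
  have hEcn : ∫ x in Eᶜ, g x ∂(νn n) ≤ 5 * ε' := by
    have hsplit : (∫ x in E, g x ∂(νn n)) + ∫ x in Eᶜ, g x ∂(νn n) = ∫ x, g x ∂(νn n) :=
      integral_add_compl hEmeas (hgintn n)
    have h1 := hkeyE (νn n) inferInstance g (hgintn n) hoscg
    have h2 := hsumdiff g habsg
    have h11 := (abs_le.mp h1).1
    have h12 := (abs_le.mp h1).2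
    have h21 := (abs_le.mp h2).1
    have h22 := (abs_le.mp h2).2
    have h31 := (abs_le.mp hgdiff).1
    have h32 := (abs_le.mp hgdiff).2
    linarith
  -- final assembly
  have hfn := hkeyF (νn n) inferInstance (hgintn n) f (hfint f hf _ (hgintn n))
    (hdom f hf) hoscf
  have hfν := hkeyF ν inferInstance hgint f (hfint f hf _ hgint) (hdom f hf) hoscf
  have hfd := hsumdiff f (hdom f hf)
  have t1 := abs_sub_le (∫ x, f x ∂(νn n))
    (∑ k ∈ Finset.range K, f (e k) * ((νn n) (A k)).toReal) (∫ x, f x ∂ν)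
  have t2 := abs_sub_le (∑ k ∈ Finset.range K, f (e k) * ((νn n) (A k)).toReal)
    (∑ k ∈ Finset.range K, f (e k) * (ν (A k)).toReal) (∫ x, f x ∂ν)
  have t3 : |(∑ k ∈ Finset.range K, f (e k) * (ν (A k)).toReal) - ∫ x, f x ∂ν|
      = |(∫ x, f x ∂ν) - ∑ k ∈ Finset.range K, f (e k) * (ν (A k)).toReal| :=
    abs_sub_comm _ _
  have hεfinal : 9 * ε' = ε := by rw [hε'def]; ring
  calc |(∫ x, f x ∂(νn n)) - ∫ x, f x ∂ν|
      ≤ |(∫ x, f x ∂(νn n)) - ∑ k ∈ Finset.range K, f (e k) * ((νn n) (A k)).toReal|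
        + |(∑ k ∈ Finset.range K, f (e k) * ((νn n) (A k)).toReal)
            - ∑ k ∈ Finset.range K, f (e k) * (ν (A k)).toReal|
        + |(∑ k ∈ Finset.range K, f (e k) * (ν (A k)).toReal) - ∫ x, f x ∂ν| := by
        linarith
    _ ≤ (ε' + ∫ x in Eᶜ, g x ∂(νn n)) + ε' + (ε' + ∫ x in Eᶜ, g x ∂ν) := by
        rw [t3]; gcongr <;> assumption
    _ ≤ ε := by linarith
end

section
/- Let 0 < α < 2 and c > 0. The function ρ is a metric on S(α, c): ρ(μ₁, μ₂) is finite, symmetric, satisfies the triangle inequality, and ρ(μ₁, μ₂) = 0 implies μ₁ = μ₂ (since then the associated functions, hence the characteristic functions, of μ₁ and μ₂ coincide on all of ℝ). -/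
open MeasureTheory Filter Finset
open scoped Topology BoundedContinuousFunction ENNReal

section Aux
open Real Complex FourierTransform Metric

noncomputable def toSchwartz (f : ℝ → ℂ) (hf : ContDiff ℝ (⊤ : ℕ∞) f)
    (h2 : HasCompactSupport f) : SchwartzMap ℝ ℂ where
  toFun := f
  smooth' := hf
  decay' := by
    intro k n
    have h3 : HasCompactSupport (iteratedFDeriv ℝ n f) := h2.iteratedFDeriv n
    have h4 : Continuous fun x : ℝ => ‖x‖ ^ k * ‖iteratedFDeriv ℝ n f x‖ := by
      have hcd : Continuous (iteratedFDeriv ℝ n f) :=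
        hf.continuous_iteratedFDeriv (by exact_mod_cast le_top)
      continuity
    have h5 : HasCompactSupport fun x : ℝ => ‖x‖ ^ k * ‖iteratedFDeriv ℝ n f x‖ :=
      HasCompactSupport.mul_left h3.norm
    obtain ⟨x₀, hx₀⟩ := h4.exists_forall_ge_of_hasCompactSupport h5
    exact ⟨_, hx₀⟩

@[simp] lemma toSchwartz_apply (f : ℝ → ℂ) (hf : ContDiff ℝ (⊤ : ℕ∞) f)
    (h2 : HasCompactSupport f) (x : ℝ) : toSchwartz f hf h2 x = f x := rfl

lemma integrable_exp_char (μ : Measure ℝ) [IsProbabilityMeasure μ] (s : ℝ) :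
    Integrable (fun x : ℝ => Complex.exp (Complex.I * (s * x))) μ := by
  apply Integrable.mono' (integrable_const (1 : ℝ))
  · apply Continuous.aestronglyMeasurable; continuity
  · filter_upwards with x
    have : Complex.I * ((s : ℂ) * x) = ((s * x : ℝ) : ℂ) * Complex.I := by push_cast; ring
    rw [this, Complex.norm_exp_ofReal_mul_I]

lemma integral_fourier_schwartz (μ : Measure ℝ) [IsProbabilityMeasure μ] (ψ : SchwartzMap ℝ ℂ) :
    ∫ x, 𝓕 (⇑ψ) x ∂μ
      = ∫ t, charFn μ (-2 * π * t) * ψ t := by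
  have hψ : Integrable (fun t => ψ t) volume := ψ.integrable
  have hswap : ∫ x, ∫ t, Complex.exp ((-2 * π * t * x : ℝ) * Complex.I) * ψ t ∂volume ∂μ
      = ∫ t, ∫ x, Complex.exp ((-2 * π * t * x : ℝ) * Complex.I) * ψ t ∂μ ∂volume := by
    apply MeasureTheory.integral_integral_swap
    have hcont : Continuous (Function.uncurry fun (x t : ℝ) =>
        Complex.exp ((-2 * π * t * x : ℝ) * Complex.I) * ψ t) := by
      apply Continuous.mul
      · apply Complex.continuous_exp.comp; continuity
      · exact ψ.continuous.comp continuous_snd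
    rw [MeasureTheory.integrable_prod_iff hcont.aestronglyMeasurable]
    constructor
    · filter_upwards with x
      apply hψ.norm.mono' ((Continuous.mul (by continuity) ψ.continuous).aestronglyMeasurable)
      filter_upwards with t
      rw [Pi.mul_apply, norm_mul, Complex.norm_exp_ofReal_mul_I, one_mul]
    · have : (fun x : ℝ => ∫ t, ‖Complex.exp ((-2 * π * t * x : ℝ) * Complex.I) * ψ t‖)
          = fun _ => ∫ t, ‖ψ t‖ := by
        funext x
        simp only [norm_mul, Complex.norm_exp_ofReal_mul_I, one_mul]
      simp only [Function.uncurry_apply_pair]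
      rw [this]; exact integrable_const _
  calc ∫ x, 𝓕 (⇑ψ) x ∂μ
      = ∫ x, ∫ t, Complex.exp ((-2 * π * t * x : ℝ) * Complex.I) * ψ t ∂volume ∂μ := by
        apply integral_congr_ae; filter_upwards with x
        rw [Real.fourier_real_eq_integral_exp_smul]
        simp [smul_eq_mul]
    _ = ∫ t, ∫ x, Complex.exp ((-2 * π * t * x : ℝ) * Complex.I) * ψ t ∂μ ∂volume := hswap
    _ = ∫ t, charFn μ (-2 * π * t) * ψ t := by
        apply integral_congr_ae; filter_upwards with t
        rw [MeasureTheory.integral_mul_const]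
        congr 1
        unfold charFn
        apply integral_congr_ae; filter_upwards with x
        congr 1
        push_cast; ring


open Metric in
section
variable (μ₁ μ₂ : Measure ℝ) [IsProbabilityMeasure μ₁] [IsProbabilityMeasure μ₂]

lemma measure_closedBall_eq
    (h : ∀ φ : SchwartzMap ℝ ℂ, ∫ x, φ x ∂μ₁ = ∫ x, φ x ∂μ₂)
    (c r : ℝ) (hr : 0 < r) : μ₁ (closedBall c r) = μ₂ (closedBall c r) := by
  set bump : ℕ → ContDiffBump c := fun n =>
    ⟨r, r + 1 / (n + 1), hr, lt_add_of_pos_right r (by positivity)⟩ with hbump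
  have hsm : ∀ n, ContDiff ℝ (⊤ : ℕ∞) fun x : ℝ => ((bump n x : ℝ) : ℂ) := fun n =>
    Complex.ofRealCLM.contDiff.comp (bump n).contDiff
  have hcs : ∀ n, HasCompactSupport fun x : ℝ => ((bump n x : ℝ) : ℂ) := fun n =>
    (bump n).hasCompactSupport.comp_left (g := fun y : ℝ => (y : ℂ)) (by simp)
  have key : ∀ n, ∫ x, bump n x ∂μ₁ = ∫ x, bump n x ∂μ₂ := by
    intro n
    have := h (toSchwartz _ (hsm n) (hcs n))
    simp only [toSchwartz_apply] at this
    have e1 : ∀ μ : Measure ℝ, ∫ x, ((bump n x : ℝ) : ℂ) ∂μ = ((∫ x, bump n x ∂μ : ℝ) : ℂ) :=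
      fun μ => integral_ofReal
    rw [e1, e1] at this
    exact_mod_cast this
  have hlim : ∀ μ : Measure ℝ, IsProbabilityMeasure μ →
      Tendsto (fun n => ∫ x, bump n x ∂μ) atTop (𝓝 ((μ (closedBall c r)).toReal)) := by
    intro μ hμ
    have hind : (μ (closedBall c r)).toReal
        = ∫ x, Set.indicator (closedBall c r) (1 : ℝ → ℝ) x ∂μ :=
      (MeasureTheory.integral_indicator_one measurableSet_closedBall).symm
    rw [hind]
    apply MeasureTheory.tendsto_integral_of_dominated_convergence (fun _ => (1:ℝ))
    · exact fun n => ((bump n).continuous).aestronglyMeasurable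
    · exact integrable_const 1
    · intro n
      filter_upwards with x
      rw [Real.norm_eq_abs, abs_le]
      exact ⟨by linarith [(bump n).nonneg (x := x)], (bump n).le_one⟩
    · filter_upwards with x
      by_cases hx : x ∈ closedBall c r
      · have : ∀ n, bump n x = 1 := fun n => (bump n).one_of_mem_closedBall hx
        simp only [this, Set.indicator_of_mem hx]
        exact tendsto_const_nhds
      · rw [Set.indicator_of_notMem hx]
        have hd : r < dist x c := by
          rw [mem_closedBall] at hx; linarith [not_le.mp hx]
        have hev : ∀ᶠ n : ℕ in atTop, bump n x = 0 := by
          have := tendsto_one_div_add_atTop_nhds_zero_nat (𝕜 := ℝ)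
          have h2 := this.eventually_lt_const (by linarith : (0:ℝ) < dist x c - r)
          filter_upwards [h2] with n hn
          exact (bump n).zero_of_le_dist (by show r + 1/(n+1) ≤ dist x c; linarith)
        exact Tendsto.congr' (hev.mono fun n hn => hn.symm) tendsto_const_nhds
  exact (ENNReal.toReal_eq_toReal_iff' (measure_ne_top _ _) (measure_ne_top _ _)).mp
    (tendsto_nhds_unique ((hlim μ₁ ‹_›).congr key) (hlim μ₂ ‹_›))
end

open Metric in
lemma measure_eq_of_schwartz (μ₁ μ₂ : Measure ℝ)
    [IsProbabilityMeasure μ₁] [IsProbabilityMeasure μ₂]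
    (h : ∀ φ : SchwartzMap ℝ ℂ, ∫ x, φ x ∂μ₁ = ∫ x, φ x ∂μ₂) : μ₁ = μ₂ := by
  apply MeasureTheory.Measure.ext_of_Iic
  intro a
  have hIcc : ∀ b : ℝ, b < a → μ₁ (Set.Icc b a) = μ₂ (Set.Icc b a) := by
    intro b hb
    have he : Set.Icc b a = closedBall ((b+a)/2) ((a-b)/2) := by
      rw [Real.closedBall_eq_Icc]; congr 1 <;> ring
    rw [he]
    exact measure_closedBall_eq _ _ h _ _ (by linarith)
  have hmono : Monotone (fun n : ℕ => Set.Icc (a - (n+1)) a) := by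
    intro m n hmn
    apply Set.Icc_subset_Icc _ le_rfl
    have : (m:ℝ) ≤ n := Nat.cast_le.mpr hmn
    linarith
  have hU : Set.Iic a = ⋃ n : ℕ, Set.Icc (a - (n+1)) a := by
    ext x
    simp only [Set.mem_Iic, Set.mem_iUnion, Set.mem_Icc]
    constructor
    · intro hx
      obtain ⟨n, hn⟩ := exists_nat_ge (a - x)
      exact ⟨n, by linarith, hx⟩
    · rintro ⟨n, _, hx⟩; exact hx
  have t1 := MeasureTheory.tendsto_measure_iUnion_atTop (μ := μ₁) hmono
  have t2 := MeasureTheory.tendsto_measure_iUnion_atTop (μ := μ₂) hmono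
  rw [hU]
  refine tendsto_nhds_unique (t1.congr fun n => ?_) t2
  exact hIcc _ (by have : (0:ℝ) ≤ n := n.cast_nonneg; linarith)

lemma measure_eq_of_charFn (μ₁ μ₂ : Measure ℝ)
    [IsProbabilityMeasure μ₁] [IsProbabilityMeasure μ₂]
    (h : ∀ t, charFn μ₁ t = charFn μ₂ t) : μ₁ = μ₂ := by
  apply measure_eq_of_schwartz
  intro φ
  set ψ := (SchwartzMap.fourierTransformCLE ℂ (SchwartzMap ℝ ℂ)).symm φ with hψ
  have hφ : ∀ x, φ x = 𝓕 (⇑ψ) x := by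
    intro x
    conv_lhs => rw [← (SchwartzMap.fourierTransformCLE ℂ (SchwartzMap ℝ ℂ)).apply_symm_apply φ]
    rw [← hψ]; rfl
  calc ∫ x, φ x ∂μ₁ = ∫ x, 𝓕 (⇑ψ) x ∂μ₁ := by simp_rw [hφ]
    _ = ∫ t, charFn μ₁ (-2 * Real.pi * t) * ψ t := integral_fourier_schwartz μ₁ ψ
    _ = ∫ t, charFn μ₂ (-2 * Real.pi * t) * ψ t := by simp_rw [h]
    _ = ∫ x, 𝓕 (⇑ψ) x ∂μ₂ := (integral_fourier_schwartz μ₂ ψ).symm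
    _ = ∫ x, φ x ∂μ₂ := by simp_rw [hφ]

lemma exists_pow_mem (x : ℝ) (hx : 1 ≤ x) : ∃ k : ℕ, 2^k ≤ x ∧ x ≤ 2^(k+1) := by
  have hex : ∃ n : ℕ, x < 2^(n+1) := by
    obtain ⟨n, hn⟩ := pow_unbounded_of_one_lt x (one_lt_two (α := ℝ))
    exact ⟨n, hn.trans_le (pow_le_pow_right₀ one_le_two (Nat.le_succ n))⟩
  classical
  set k := Nat.find hex with hk
  refine ⟨k, ?_, (Nat.find_spec hex).le⟩
  rcases Nat.eq_zero_or_pos k with h0 | h0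
  · rw [h0]; simpa using hx
  · have := Nat.find_min hex (m := k - 1) (by omega)
    push_neg at this
    have : (2:ℝ)^(k-1+1) ≤ x := this
    rwa [Nat.sub_add_cancel h0] at this

section sups
variable {β₁ β₂ β₃ : ℝ → ℝ} {M₁ M₂ M₃ : ℝ}

instance nonempty_unit : Nonempty {t : ℝ // |t| ≤ 1} := ⟨⟨0, by norm_num⟩⟩
instance nonempty_ann (k : ℕ) : Nonempty {t : ℝ // 2^k ≤ |t| ∧ |t| ≤ 2^(k+1)} :=
  ⟨⟨2^k, by rw [abs_of_pos (by positivity)]; exact ⟨le_rfl, pow_le_pow_right₀ one_le_two (Nat.le_succ k)⟩⟩⟩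

lemma bdd_sub {ι : Sort*} (h1 : ∀ t, |β₁ t| ≤ M₁) (h2 : ∀ t, |β₂ t| ≤ M₂)
    (g : ι → ℝ) : ∀ i : ι, |β₁ (g i) - β₂ (g i)| ≤ M₁ + M₂ := fun i =>
  (abs_sub _ _).trans (add_le_add (h1 _) (h2 _))

lemma bddAbove_sub {ι : Type*} (h1 : ∀ t, |β₁ t| ≤ M₁) (h2 : ∀ t, |β₂ t| ≤ M₂)
    (g : ι → ℝ) : BddAbove (Set.range fun i => |β₁ (g i) - β₂ (g i)|) :=
  ⟨M₁ + M₂, by rintro _ ⟨i, rfl⟩; exact bdd_sub h1 h2 g i⟩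
end sups

end Aux

/-- `ρ` is a metric on `S(α, c)`: it is finite (the defining series is summable),
nonnegative, symmetric, satisfies the triangle inequality, and `ρ(μ₁, μ₂) = 0` implies
`μ₁ = μ₂`. -/


theorem statement5
    (α c : ℝ) (hα : 0 < α) (hα2 : α < 2) (hc : 0 < c)
    (μ₁ μ₂ μ₃ : Measure ℝ) (β₁ β₂ β₃ : ℝ → ℝ)
    (h1 : MemS α c μ₁) (h2 : MemS α c μ₂) (h3 : MemS α c μ₃)
    (hβ₁ : IsAssocFn α c μ₁ β₁) (hβ₂ : IsAssocFn α c μ₂ β₂) (hβ₃ : IsAssocFn α c μ₃ β₃) :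
    (Summable fun k : ℕ => (2 ^ k : ℝ)⁻¹ *
        ⨆ t : {t : ℝ // 2 ^ k ≤ |t| ∧ |t| ≤ 2 ^ (k + 1)}, |β₁ t.1 - β₂ t.1|) ∧
    0 ≤ rho β₁ β₂ ∧
    rho β₁ β₂ = rho β₂ β₁ ∧
    rho β₁ β₃ ≤ rho β₁ β₂ + rho β₂ β₃ ∧
    (rho β₁ β₂ = 0 → μ₁ = μ₂) := by
  obtain ⟨M₁, hM₁⟩ := hβ₁.bounded
  obtain ⟨M₂, hM₂⟩ := hβ₂.bounded
  obtain ⟨M₃, hM₃⟩ := hβ₃.bounded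
  classical
  -- notation
  set S12 : ℕ → ℝ := fun k => ⨆ t : {t : ℝ // 2^k ≤ |t| ∧ |t| ≤ 2^(k+1)}, |β₁ t.1 - β₂ t.1| with hS12
  set S23 : ℕ → ℝ := fun k => ⨆ t : {t : ℝ // 2^k ≤ |t| ∧ |t| ≤ 2^(k+1)}, |β₂ t.1 - β₃ t.1| with hS23
  set S13 : ℕ → ℝ := fun k => ⨆ t : {t : ℝ // 2^k ≤ |t| ∧ |t| ≤ 2^(k+1)}, |β₁ t.1 - β₃ t.1| with hS13
  have hgeom : Summable fun k : ℕ => ((2:ℝ)^k)⁻¹ := by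
    have := summable_geometric_of_lt_one (r := (2:ℝ)⁻¹) (by norm_num) (by norm_num)
    simpa [inv_pow] using this
  have sup_le : ∀ {γ₁ γ₂ : ℝ → ℝ} {N₁ N₂ : ℝ}, (∀ t, |γ₁ t| ≤ N₁) → (∀ t, |γ₂ t| ≤ N₂) →
      ∀ k : ℕ, (⨆ t : {t : ℝ // 2^k ≤ |t| ∧ |t| ≤ 2^(k+1)}, |γ₁ t.1 - γ₂ t.1|) ≤ N₁ + N₂ := by
    intro γ₁ γ₂ N₁ N₂ hg1 hg2 k
    exact ciSup_le (bdd_sub hg1 hg2 _)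
  have sup_nonneg : ∀ {γ₁ γ₂ : ℝ → ℝ} {N₁ N₂ : ℝ}, (∀ t, |γ₁ t| ≤ N₁) → (∀ t, |γ₂ t| ≤ N₂) →
      ∀ k : ℕ, 0 ≤ ⨆ t : {t : ℝ // 2^k ≤ |t| ∧ |t| ≤ 2^(k+1)}, |γ₁ t.1 - γ₂ t.1| := by
    intro γ₁ γ₂ N₁ N₂ hg1 hg2 k
    exact le_trans (abs_nonneg _) (le_ciSup (bddAbove_sub hg1 hg2 _) (Classical.arbitrary _))
  have summ : ∀ {γ₁ γ₂ : ℝ → ℝ} {N₁ N₂ : ℝ}, (∀ t, |γ₁ t| ≤ N₁) → (∀ t, |γ₂ t| ≤ N₂) →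
      Summable (fun k : ℕ => ((2:ℝ)^k)⁻¹ *
        ⨆ t : {t : ℝ // 2^k ≤ |t| ∧ |t| ≤ 2^(k+1)}, |γ₁ t.1 - γ₂ t.1|) := by
    intro γ₁ γ₂ N₁ N₂ hg1 hg2
    apply Summable.of_nonneg_of_le
      (fun k => mul_nonneg (by positivity) (sup_nonneg hg1 hg2 k))
      (fun k => ?_) (hgeom.mul_left (N₁ + N₂))
    calc ((2:ℝ)^k)⁻¹ * (⨆ t : {t : ℝ // 2^k ≤ |t| ∧ |t| ≤ 2^(k+1)}, |γ₁ t.1 - γ₂ t.1|)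
        ≤ ((2:ℝ)^k)⁻¹ * (N₁ + N₂) :=
          mul_le_mul_of_nonneg_left (sup_le hg1 hg2 k) (by positivity)
      _ = (N₁ + N₂) * ((2:ℝ)^k)⁻¹ := mul_comm _ _
  have hsum12 : Summable fun k : ℕ => ((2:ℝ)^k)⁻¹ * S12 k := summ hM₁ hM₂
  have hsum23 : Summable fun k : ℕ => ((2:ℝ)^k)⁻¹ * S23 k := summ hM₂ hM₃
  have hsum13 : Summable fun k : ℕ => ((2:ℝ)^k)⁻¹ * S13 k := summ hM₁ hM₃
  have hA_nonneg : ∀ {γ₁ γ₂ : ℝ → ℝ} {N₁ N₂ : ℝ}, (∀ t, |γ₁ t| ≤ N₁) → (∀ t, |γ₂ t| ≤ N₂) →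
      0 ≤ ⨆ t : {t : ℝ // |t| ≤ 1}, |γ₁ t.1 - γ₂ t.1| := by
    intro γ₁ γ₂ N₁ N₂ hg1 hg2
    exact le_trans (abs_nonneg _) (le_ciSup (bddAbove_sub hg1 hg2 _) (Classical.arbitrary _))
  have hrho_nonneg : 0 ≤ rho β₁ β₂ := by
    unfold rho
    exact add_nonneg (hA_nonneg hM₁ hM₂)
      (tsum_nonneg fun k => mul_nonneg (by positivity) (sup_nonneg hM₁ hM₂ k))
  refine ⟨hsum12, hrho_nonneg, ?_, ?_, ?_⟩
  · -- symmetry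
    unfold rho
    congr 1
    · exact iSup_congr fun t => abs_sub_comm _ _
    · exact tsum_congr fun k => by
        rw [iSup_congr fun t : {t : ℝ // 2^k ≤ |t| ∧ |t| ≤ 2^(k+1)} => abs_sub_comm (β₁ t.1) (β₂ t.1)]
  · -- triangle inequality
    unfold rho
    have hAtri : (⨆ t : {t : ℝ // |t| ≤ 1}, |β₁ t.1 - β₃ t.1|)
        ≤ (⨆ t : {t : ℝ // |t| ≤ 1}, |β₁ t.1 - β₂ t.1|)
          + ⨆ t : {t : ℝ // |t| ≤ 1}, |β₂ t.1 - β₃ t.1| := by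
      apply ciSup_le
      intro t
      exact (abs_sub_le _ _ _).trans (add_le_add
        (le_ciSup (bddAbove_sub hM₁ hM₂ _) t) (le_ciSup (bddAbove_sub hM₂ hM₃ _) t))
    have hStri : ∀ k, S13 k ≤ S12 k + S23 k := by
      intro k
      apply ciSup_le
      intro t
      exact (abs_sub_le _ _ _).trans (add_le_add
        (le_ciSup (bddAbove_sub hM₁ hM₂ _) t) (le_ciSup (bddAbove_sub hM₂ hM₃ _) t))
    have htsum : (∑' k : ℕ, ((2:ℝ)^k)⁻¹ * S13 k)
        ≤ (∑' k : ℕ, ((2:ℝ)^k)⁻¹ * S12 k) + ∑' k : ℕ, ((2:ℝ)^k)⁻¹ * S23 k := by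
      rw [← Summable.tsum_add hsum12 hsum23]
      apply Summable.tsum_le_tsum _ hsum13 (hsum12.add hsum23)
      intro k
      rw [← mul_add]
      exact mul_le_mul_of_nonneg_left (hStri k) (by positivity)
    calc (⨆ t : {t : ℝ // |t| ≤ 1}, |β₁ t.1 - β₃ t.1|) + ∑' k : ℕ, ((2:ℝ)^k)⁻¹ * S13 k
        ≤ ((⨆ t : {t : ℝ // |t| ≤ 1}, |β₁ t.1 - β₂ t.1|)
            + ⨆ t : {t : ℝ // |t| ≤ 1}, |β₂ t.1 - β₃ t.1|)
          + ((∑' k : ℕ, ((2:ℝ)^k)⁻¹ * S12 k) + ∑' k : ℕ, ((2:ℝ)^k)⁻¹ * S23 k) :=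
          add_le_add hAtri htsum
      _ = _ := by ring
  · -- rho = 0 implies equality of measures
    intro h0
    unfold rho at h0
    have hT_nonneg : 0 ≤ ∑' k : ℕ, ((2:ℝ)^k)⁻¹ * S12 k :=
      tsum_nonneg fun k => mul_nonneg (by positivity) (sup_nonneg hM₁ hM₂ k)
    have hA0 : (⨆ t : {t : ℝ // |t| ≤ 1}, |β₁ t.1 - β₂ t.1|) = 0 := by
      have := hA_nonneg hM₁ hM₂ (γ₁ := β₁) (γ₂ := β₂)
      linarith
    have hT0 : (∑' k : ℕ, ((2:ℝ)^k)⁻¹ * S12 k) = 0 := by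
      have := hA_nonneg hM₁ hM₂ (γ₁ := β₁) (γ₂ := β₂)
      linarith
    have hterm0 : ∀ k, S12 k = 0 := by
      intro k
      have hle : ((2:ℝ)^k)⁻¹ * S12 k ≤ 0 := by
        rw [← hT0]
        exact Summable.le_tsum hsum12 k fun j _ => mul_nonneg (by positivity) (sup_nonneg hM₁ hM₂ j)
      have hge : 0 ≤ ((2:ℝ)^k)⁻¹ * S12 k := mul_nonneg (by positivity) (sup_nonneg hM₁ hM₂ k)
      have : ((2:ℝ)^k)⁻¹ * S12 k = 0 := le_antisymm hle hge
      rcases mul_eq_zero.mp this with h | h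
      · exact absurd h (by positivity)
      · exact h
    have hβeq : ∀ t, β₁ t = β₂ t := by
      intro t
      rcases le_or_gt |t| 1 with ht | ht
      · have hle : |β₁ t - β₂ t| ≤ 0 := by
          rw [← hA0]
          exact le_ciSup (bddAbove_sub hM₁ hM₂
            (fun s : {t : ℝ // |t| ≤ 1} => s.1)) (⟨t, ht⟩ : {t : ℝ // |t| ≤ 1})
        have := abs_nonneg (β₁ t - β₂ t)
        rw [← sub_eq_zero]
        exact abs_eq_zero.mp (le_antisymm hle this)
      · obtain ⟨k, hk1, hk2⟩ := exists_pow_mem |t| ht.le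
        have hle : |β₁ t - β₂ t| ≤ 0 := by
          rw [← hterm0 k]
          exact le_ciSup (bddAbove_sub hM₁ hM₂
              (fun s : {t : ℝ // 2^k ≤ |t| ∧ |t| ≤ 2^(k+1)} => s.1))
            (⟨t, hk1, hk2⟩ : {t : ℝ // 2^k ≤ |t| ∧ |t| ≤ 2^(k+1)})
        have := abs_nonneg (β₁ t - β₂ t)
        rw [← sub_eq_zero]
        exact abs_eq_zero.mp (le_antisymm hle this)
    have hchar : ∀ t, charFn μ₁ t = charFn μ₂ t := by
      intro t
      rw [hβ₁.eq, hβ₂.eq, hβeq t]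
    haveI := h1.1
    haveI := h2.1
    exact measure_eq_of_charFn μ₁ μ₂ hchar
end

section
/- Let 0 < α < 2, c > 0, and let μ, μ₁, μ₂, … ∈ S(α, c) with associated functions β, β₁, β₂, …. Assume that μ_n → μ in distribution (weakly) and that β_n(t) → 0 as t → 0 uniformly in n (i.e. sup_n sup_{0<|t|≤1/m} |β_n(t)| → 0 as m → ∞). Then ρ(μ_n, μ) → 0 as n → ∞. -/
open MeasureTheory Filter Finset
open scoped Topology BoundedContinuousFunction ENNReal

section AUX

private lemma integrable_cos (ν : Measure ℝ) (hν : IsProbabilityMeasure ν) (t : ℝ) :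
    Integrable (fun x => Real.cos (t * x)) ν := by
  haveI := hν
  apply (integrable_const (1:ℝ)).mono'
  · exact (Real.continuous_cos.comp (continuous_const.mul continuous_id)).aestronglyMeasurable
  · exact .of_forall fun x => by
      rw [Real.norm_eq_abs]; exact Real.abs_cos_le_one _

private lemma integrable_exp_I (ν : Measure ℝ) (hν : IsProbabilityMeasure ν) (t : ℝ) :
    Integrable (fun x : ℝ => Complex.exp (Complex.I * (t * x))) ν := by
  haveI := hν
  apply (integrable_const (1:ℝ)).mono'
  · apply Continuous.aestronglyMeasurable
    fun_prop
  · refine .of_forall fun x => ?_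
    rw [show Complex.I * ((t:ℂ) * (x:ℂ)) = ((t * x : ℝ) : ℂ) * Complex.I by push_cast; ring]
    rw [Complex.norm_exp_ofReal_mul_I]

private lemma phi_eq {α c : ℝ} {ν : Measure ℝ} {β : ℝ → ℝ} (hν : IsProbabilityMeasure ν)
    (h : IsAssocFn α c ν β) (t : ℝ) :
    ∫ x, Real.cos (t * x) ∂ν = 1 - c * |t| ^ α + β t * |t| ^ α := by
  have h2 : (charFn ν t).re = 1 - c * |t| ^ α + β t * |t| ^ α := by
    rw [h.eq t, Complex.ofReal_re]
  rw [← h2]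
  simp only [charFn]
  have h5 := integral_re (μ := ν) (f := fun x : ℝ => Complex.exp (Complex.I * (t * x)))
    (integrable_exp_I ν hν t)
  simp only [RCLike.re_to_complex] at h5
  rw [← h5]
  refine integral_congr_ae (.of_forall fun x => ?_)
  simp only
  rw [show Complex.I * ((t:ℂ) * (x:ℂ)) = ((t * x : ℝ) : ℂ) * Complex.I by push_cast; ring,
    Complex.exp_ofReal_mul_I_re]

private lemma cos_diff_bound (ε a b : ℝ) (hε : 0 < ε) :
    |Real.cos a - Real.cos b| ≤ ε + (2 / ε) * (1 - Real.cos (a - b)) := by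
  have h1 : Real.cos a - Real.cos b =
      -2 * Real.sin ((a + b) / 2) * Real.sin ((a - b) / 2) := Real.cos_sub_cos a b
  set u := Real.sin ((a - b) / 2) with hu
  set v := Real.sin ((a + b) / 2) with hv
  have hv1 : |v| ≤ 1 := abs_le.mpr ⟨Real.neg_one_le_sin _, Real.sin_le_one _⟩
  have hcos : Real.cos (a - b) = 1 - 2 * u ^ 2 := by
    have h2 := Real.sin_sq_eq_half_sub ((a - b) / 2)
    rw [show 2 * ((a - b) / 2) = a - b by ring] at h2
    rw [hu]; linarith
  have habs : |Real.cos a - Real.cos b| ≤ 2 * |u| := by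
    rw [h1]
    rw [abs_mul, abs_mul]
    have : |(-2 : ℝ)| = 2 := by norm_num
    rw [this]
    nlinarith [abs_nonneg u, abs_nonneg v]
  have key : 2 * |u| ≤ ε + (2 / ε) * (2 * u ^ 2) := by
    rw [div_mul_eq_mul_div, ← sub_le_iff_le_add', le_div_iff₀ hε]
    nlinarith [sq_nonneg (ε - 2 * |u|), sq_abs u]
  rw [hcos]
  calc |Real.cos a - Real.cos b| ≤ 2 * |u| := habs
    _ ≤ ε + (2 / ε) * (2 * u ^ 2) := key
    _ = ε + (2 / ε) * (1 - (1 - 2 * u ^ 2)) := by ring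

private lemma phi_incr (ν : Measure ℝ) (hν : IsProbabilityMeasure ν) (s t ε : ℝ) (hε : 0 < ε) :
    |(∫ x, Real.cos (s * x) ∂ν) - ∫ x, Real.cos (t * x) ∂ν|
      ≤ ε + (2 / ε) * (1 - ∫ x, Real.cos ((s - t) * x) ∂ν) := by
  haveI := hν
  have his := integrable_cos ν hν s
  have hit := integrable_cos ν hν t
  have hid := integrable_cos ν hν (s - t)
  have hmaj1 : Integrable (fun x => (1 : ℝ) - Real.cos ((s - t) * x)) ν := by
    exact (integrable_const (1:ℝ)).sub hid
  have hmaj2 : Integrable (fun x => (2 / ε) * (1 - Real.cos ((s - t) * x))) ν :=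
    hmaj1.const_mul _
  have hmaj : Integrable (fun x => ε + (2 / ε) * (1 - Real.cos ((s - t) * x))) ν :=
    (integrable_const ε).add hmaj2
  calc |(∫ x, Real.cos (s * x) ∂ν) - ∫ x, Real.cos (t * x) ∂ν|
      = |∫ x, (Real.cos (s * x) - Real.cos (t * x)) ∂ν| := by rw [integral_sub his hit]
    _ ≤ ∫ x, |Real.cos (s * x) - Real.cos (t * x)| ∂ν := by
        simpa [Real.norm_eq_abs] using
          norm_integral_le_integral_norm (μ := ν) (fun x => Real.cos (s * x) - Real.cos (t * x))
    _ ≤ ∫ x, (ε + (2 / ε) * (1 - Real.cos ((s - t) * x))) ∂ν := by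
        have hsub : Integrable (fun x => Real.cos (s * x) - Real.cos (t * x)) ν := by
          exact his.sub hit
        refine integral_mono hsub.abs hmaj fun x => ?_
        have := cos_diff_bound ε (s * x) (t * x) hε
        rw [show s * x - t * x = (s - t) * x by ring] at this
        exact this
    _ = ε + (2 / ε) * (1 - ∫ x, Real.cos ((s - t) * x) ∂ν) := by
        rw [integral_add (integrable_const ε) hmaj2, integral_const, integral_const_mul,
          integral_sub (integrable_const 1) hid, integral_const]
        simp [measure_univ]

private lemma assoc_abs_le {α c : ℝ} {ν : Measure ℝ} {β : ℝ → ℝ} (hα : 0 < α) (hc : 0 < c)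
    (hν : IsProbabilityMeasure ν) (h : IsAssocFn α c ν β) (t : ℝ) (ht : 1 ≤ |t|) :
    |β t| ≤ 2 + c := by
  haveI := hν
  have h1 : |∫ x, Real.cos (t * x) ∂ν| ≤ 1 := by
    calc |∫ x, Real.cos (t * x) ∂ν| ≤ ∫ x, |Real.cos (t * x)| ∂ν := by
          simpa [Real.norm_eq_abs] using
            norm_integral_le_integral_norm (μ := ν) (fun x => Real.cos (t * x))
      _ ≤ ∫ _x, (1 : ℝ) ∂ν := integral_mono (integrable_cos ν hν t).abs (integrable_const 1)
          (fun x => Real.abs_cos_le_one _)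
      _ = 1 := by simp
  have h2 := phi_eq hν h t
  have hpow : (1 : ℝ) ≤ |t| ^ α := Real.one_le_rpow ht hα.le
  have hpow0 : (0 : ℝ) ≤ |t| ^ α := Real.rpow_nonneg (abs_nonneg t) α
  have h3 : β t * |t| ^ α = (∫ x, Real.cos (t * x) ∂ν) - (1 - c * |t| ^ α) := by
    rw [h2]; ring
  have h4 : |β t| * |t| ^ α ≤ (2 + c) * |t| ^ α := by
    calc |β t| * |t| ^ α = |β t * |t| ^ α| := by rw [abs_mul, abs_of_nonneg hpow0]
      _ = |(∫ x, Real.cos (t * x) ∂ν) - (1 - c * |t| ^ α)| := by rw [h3]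
      _ ≤ |∫ x, Real.cos (t * x) ∂ν| + |1 - c * |t| ^ α| := abs_sub _ _
      _ ≤ 1 + (1 + c * |t| ^ α) := by
          gcongr
          calc |1 - c * |t| ^ α| ≤ |(1:ℝ)| + |c * |t| ^ α| := abs_sub _ _
            _ = 1 + c * |t| ^ α := by
                rw [abs_one, abs_mul, abs_of_nonneg hc.le, abs_of_nonneg hpow0]
      _ ≤ (2 + c) * |t| ^ α := by nlinarith
  exact le_of_mul_le_mul_right h4 (lt_of_lt_of_le one_pos hpow)

private lemma beta_small {α c : ℝ} {ν : Measure ℝ} {β : ℝ → ℝ} (h : IsAssocFn α c ν β)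
    (ε : ℝ) (hε : 0 < ε) : ∃ δ > (0:ℝ), ∀ t : ℝ, |t| ≤ δ → |β t| ≤ ε := by
  have hcont : ContinuousAt β 0 := h.continuous.continuousAt
  rw [Metric.continuousAt_iff] at hcont
  obtain ⟨δ, hδpos, hδ⟩ := hcont ε hε
  refine ⟨δ / 2, by linarith, fun t ht => ?_⟩
  have h2 := hδ (x := t) (by rw [Real.dist_eq, sub_zero]; linarith)
  rw [Real.dist_eq, h.zero, sub_zero] at h2
  exact h2.le

private lemma unif_conv (G : ℕ → ℝ → ℝ) (g : ℝ → ℝ)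
    (hpt : ∀ t, Tendsto (fun n => G n t) atTop (𝓝 (g t)))
    (hmod : ∀ ε > (0:ℝ), ∃ δ > (0:ℝ), ∀ s t : ℝ, |s - t| ≤ δ →
      (∀ n, |G n s - G n t| ≤ ε) ∧ |g s - g t| ≤ ε)
    (R : ℝ) (hR : 0 < R) (ε : ℝ) (hε : 0 < ε) :
    ∀ᶠ n in atTop, ∀ t : ℝ, |t| ≤ R → |G n t - g t| ≤ ε := by
  obtain ⟨δ, hδpos, hδ⟩ := hmod (ε / 3) (by positivity)
  set M := ⌈2 * R / δ⌉₊ with hM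
  set p : ℕ → ℝ := fun j => -R + j * δ with hp
  have hev : ∀ᶠ n in atTop, ∀ j ∈ Finset.range (M + 1), |G n (p j) - g (p j)| ≤ ε / 3 := by
    rw [eventually_all_finset]
    intro j _
    have h1 : ∀ᶠ n in atTop, G n (p j) ∈ Metric.ball (g (p j)) (ε / 3) :=
      (hpt (p j)) (Metric.ball_mem_nhds _ (by positivity))
    filter_upwards [h1] with n hn
    rw [Metric.mem_ball, Real.dist_eq] at hn
    exact hn.le
  filter_upwards [hev] with n hn t ht
  set j := ⌊(t + R) / δ⌋₊ with hj
  have htR : 0 ≤ t + R := by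
    have := neg_le_of_abs_le ht; linarith
  have h2 : (j : ℝ) ≤ (t + R) / δ := Nat.floor_le (by positivity)
  have h3 : (t + R) / δ < j + 1 := Nat.lt_floor_add_one _
  have hjM : j ∈ Finset.range (M + 1) := by
    rw [Finset.mem_range, Nat.lt_succ_iff]
    have h4 : (t + R) / δ ≤ (M : ℝ) := by
      calc (t + R) / δ ≤ 2 * R / δ := by
            have h5 : t + R ≤ 2 * R := by
              have := le_of_abs_le ht; linarith
            exact div_le_div_of_nonneg_right h5 hδpos.le
        _ ≤ M := Nat.le_ceil _
    calc j = ⌊(t + R) / δ⌋₊ := rfl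
      _ ≤ ⌊(M : ℝ)⌋₊ := Nat.floor_mono h4
      _ = M := Nat.floor_natCast M
  have hclose : |t - p j| ≤ δ := by
    rw [abs_le]
    constructor
    · have : (j : ℝ) * δ ≤ t + R := by
        rw [← le_div_iff₀ hδpos]; exact h2
      simp only [hp]; nlinarith
    · have : t + R < ((j : ℝ) + 1) * δ := by
        rw [← div_lt_iff₀ hδpos]; exact h3
      simp only [hp]; nlinarith
  obtain ⟨hG1, hg1⟩ := hδ t (p j) hclose
  have hmid := hn j hjM
  have e : G n t - g t = (G n t - G n (p j)) + (G n (p j) - g (p j)) + (g (p j) - g t) := by ring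
  rw [e]
  calc |(G n t - G n (p j)) + (G n (p j) - g (p j)) + (g (p j) - g t)|
      ≤ |(G n t - G n (p j)) + (G n (p j) - g (p j))| + |g (p j) - g t| := abs_add_le _ _
    _ ≤ |G n t - G n (p j)| + |G n (p j) - g (p j)| + |g (p j) - g t| := by
        have := abs_add_le (G n t - G n (p j)) (G n (p j) - g (p j)); linarith
    _ ≤ ε / 3 + ε / 3 + ε / 3 := by
        have h5 := hG1 n
        have h6 : |g (p j) - g t| = |g t - g (p j)| := abs_sub_comm _ _
        rw [h6]; exact add_le_add (add_le_add h5 hmid) hg1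
    _ = ε := by ring

end AUX

set_option maxHeartbeats 1000000 in
/-- If `μ, μ₁, μ₂, … ∈ S(α, c)`, `μ_n → μ` in distribution, and `β_n(t) → 0` as `t → 0`
uniformly in `n`, then `ρ(μ_n, μ) → 0`. -/
theorem statement7
    (α c : ℝ) (hα : 0 < α) (hα2 : α < 2) (hc : 0 < c)
    (μ : Measure ℝ) (μn : ℕ → Measure ℝ) (β : ℝ → ℝ) (βn : ℕ → ℝ → ℝ)
    (hμ : MemS α c μ) (hμn : ∀ n, MemS α c (μn n))
    (hβ : IsAssocFn α c μ β) (hβn : ∀ n, IsAssocFn α c (μn n) (βn n))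
    (hweak : ∀ f : ℝ →ᵇ ℝ, Tendsto (fun n => ∫ x, f x ∂(μn n)) atTop (𝓝 (∫ x, f x ∂μ)))
    (hunif : ∀ ε > (0 : ℝ), ∃ δ > (0 : ℝ), ∀ n : ℕ, ∀ t : ℝ, |t| ≤ δ → |βn n t| ≤ ε) :
    Tendsto (fun n => rho (βn n) β) atTop (𝓝 0) := by
  have hprob : ∀ n, IsProbabilityMeasure (μn n) := fun n => (hμn n).1
  have hprobμ : IsProbabilityMeasure μ := hμ.1
  -- pointwise convergence of ∫ cos
  have hpt : ∀ t : ℝ, Tendsto (fun n => ∫ x, Real.cos (t * x) ∂(μn n)) atTop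
      (𝓝 (∫ x, Real.cos (t * x) ∂μ)) := by
    intro t
    have hcont : Continuous fun x : ℝ => Real.cos (t * x) := by fun_prop
    have hbd : ∀ x : ℝ, ‖Real.cos (t * x)‖ ≤ 1 := fun x => by
      rw [Real.norm_eq_abs]; exact Real.abs_cos_le_one _
    simpa using hweak (BoundedContinuousFunction.ofNormedAddCommGroup _ hcont 1 hbd)
  have hptF : ∀ t : ℝ, Tendsto (fun n => 1 - c * |t| ^ α + βn n t * |t| ^ α) atTop
      (𝓝 (1 - c * |t| ^ α + β t * |t| ^ α)) := by
    intro t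
    have h1 := hpt t
    rw [phi_eq hprobμ hβ t] at h1
    exact h1.congr fun n => phi_eq (hprob n) (hβn n) t
  obtain ⟨δ₁, hδ₁pos, hδ₁⟩ := hunif 1 one_pos
  obtain ⟨δ₂, hδ₂pos, hδ₂⟩ := beta_small hβ 1 one_pos
  -- uniform modulus of continuity
  have hmod : ∀ ε > (0:ℝ), ∃ δ > (0:ℝ), ∀ s t : ℝ, |s - t| ≤ δ →
      (∀ n, |(1 - c * |s| ^ α + βn n s * |s| ^ α) - (1 - c * |t| ^ α + βn n t * |t| ^ α)| ≤ ε) ∧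
      |(1 - c * |s| ^ α + β s * |s| ^ α) - (1 - c * |t| ^ α + β t * |t| ^ α)| ≤ ε := by
    intro ε hε
    set q : ℝ := ε ^ 2 / (8 * (c + 1)) with hq
    have hqpos : 0 < q := by positivity
    have hρpos : (0:ℝ) < q ^ (1/α) := Real.rpow_pos_of_pos hqpos _
    refine ⟨min (min δ₁ δ₂) (q ^ (1/α)), by positivity, fun s t hst => ?_⟩
    have hqa : |s - t| ^ α ≤ q := by
      calc |s - t| ^ α ≤ (q ^ (1/α)) ^ α :=
            Real.rpow_le_rpow (abs_nonneg _) (hst.trans (min_le_right _ _)) hα.le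
        _ = q := by
            rw [← Real.rpow_mul hqpos.le, one_div, inv_mul_cancel₀ hα.ne', Real.rpow_one]
    have honem : ∀ b : ℝ, |b| ≤ 1 →
        1 - (1 - c * |s - t| ^ α + b * |s - t| ^ α) ≤ ε ^ 2 / 8 := by
      intro b hb
      have hpow0 : 0 ≤ |s - t| ^ α := Real.rpow_nonneg (abs_nonneg _) _
      have h1 : 1 - (1 - c * |s - t| ^ α + b * |s - t| ^ α) = (c - b) * |s - t| ^ α := by ring
      rw [h1]
      have h2 : (c - b) * |s - t| ^ α ≤ (c + 1) * |s - t| ^ α := by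
        apply mul_le_mul_of_nonneg_right _ hpow0
        have := abs_le.mp hb; linarith
      have h3 : (c + 1) * |s - t| ^ α ≤ (c + 1) * q := by
        apply mul_le_mul_of_nonneg_left hqa (by linarith)
      have hc1 : c + 1 ≠ 0 := by positivity
      have h4 : (c + 1) * q = ε ^ 2 / 8 := by
        rw [hq]; field_simp
      linarith
    have hd12 : |s - t| ≤ min δ₁ δ₂ := hst.trans (min_le_left _ _)
    have happ : ∀ (ν : Measure ℝ), IsProbabilityMeasure ν → ∀ (b : ℝ → ℝ),
        IsAssocFn α c ν b → |b (s - t)| ≤ 1 →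
        |(1 - c * |s| ^ α + b s * |s| ^ α) - (1 - c * |t| ^ α + b t * |t| ^ α)| ≤ ε := by
      intro ν hν b hbν hb1
      have h5 := phi_incr ν hν s t (ε / 2) (by positivity)
      rw [phi_eq hν hbν s, phi_eq hν hbν t, phi_eq hν hbν (s - t)] at h5
      have h6 : 2 / (ε / 2) = 4 / ε := by
        rw [div_div_eq_mul_div]; norm_num
      rw [h6] at h5
      have h7 := honem (b (s - t)) hb1
      have h8 : (4 / ε) * (1 - (1 - c * |s - t| ^ α + b (s - t) * |s - t| ^ α))
          ≤ (4 / ε) * (ε ^ 2 / 8) := mul_le_mul_of_nonneg_left h7 (by positivity)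
      have h9 : (4 / ε) * (ε ^ 2 / 8) = ε / 2 := by
        field_simp; ring
      linarith
    refine ⟨fun n => happ (μn n) (hprob n) (βn n) (hβn n)
      (hδ₁ n _ (hd12.trans (min_le_left _ _))), happ μ hprobμ β hβ
      (hδ₂ _ (hd12.trans (min_le_right _ _)))⟩
  -- band bound
  have hband : ∀ (k : ℕ) (t : ℝ), (2:ℝ)^k ≤ |t| → ∀ n, |βn n t - β t| ≤ 4 + 2 * c := by
    intro k t ht n
    have h1 : (1:ℝ) ≤ |t| := le_trans (one_le_pow₀ (by norm_num)) ht
    have h2 := assoc_abs_le hα hc (hprob n) (hβn n) t h1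
    have h3 := assoc_abs_le hα hc hprobμ hβ t h1
    calc |βn n t - β t| ≤ |βn n t| + |β t| := abs_sub _ _
      _ ≤ (2 + c) + (2 + c) := add_le_add h2 h3
      _ = 4 + 2 * c := by ring
  haveI hne1 : Nonempty {t : ℝ // |t| ≤ 1} := ⟨⟨0, by simp⟩⟩
  have hne2 : ∀ k : ℕ, Nonempty {t : ℝ // (2:ℝ)^k ≤ |t| ∧ |t| ≤ 2^(k+1)} := fun k =>
    ⟨⟨2^k, by
      constructor
      · exact le_of_eq (abs_of_pos (by positivity)).symm
      · rw [abs_of_pos (by positivity)]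
        exact pow_le_pow_right₀ (by norm_num) (Nat.le_succ k)⟩⟩
  have hbsup : ∀ n k,
      (⨆ t : {t : ℝ // (2:ℝ)^k ≤ |t| ∧ |t| ≤ 2^(k+1)}, |βn n t.1 - β t.1|) ≤ 4 + 2 * c := by
    intro n k
    haveI := hne2 k
    exact ciSup_le fun t => hband k t.1 t.2.1 n
  have hbnonneg : ∀ n k,
      0 ≤ ⨆ t : {t : ℝ // (2:ℝ)^k ≤ |t| ∧ |t| ≤ 2^(k+1)}, |βn n t.1 - β t.1| := fun n k =>
    Real.iSup_nonneg fun t => abs_nonneg _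
  have hsum : ∀ n, Summable (fun k : ℕ => ((2:ℝ)^k)⁻¹ *
      ⨆ t : {t : ℝ // (2:ℝ)^k ≤ |t| ∧ |t| ≤ 2^(k+1)}, |βn n t.1 - β t.1|) := by
    intro n
    apply Summable.of_nonneg_of_le
      (fun k => mul_nonneg (by positivity) (hbnonneg n k))
      (fun k => ?_)
      (((summable_geometric_of_lt_one (by norm_num) (by norm_num)).mul_left (4 + 2 * c)) :
        Summable fun k : ℕ => (4 + 2 * c) * (2⁻¹ : ℝ) ^ k)
    calc ((2:ℝ)^k)⁻¹ * (⨆ t : {t : ℝ // (2:ℝ)^k ≤ |t| ∧ |t| ≤ 2^(k+1)}, |βn n t.1 - β t.1|)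
        ≤ ((2:ℝ)^k)⁻¹ * (4 + 2 * c) := mul_le_mul_of_nonneg_left (hbsup n k) (by positivity)
      _ = (4 + 2 * c) * (2⁻¹ : ℝ) ^ k := by rw [inv_pow]; ring
  -- main estimate
  rw [NormedAddCommGroup.tendsto_nhds_zero]
  intro ε hε
  obtain ⟨K, hK⟩ : ∃ K : ℕ, ((2:ℝ)⁻¹) ^ K < ε / (16 * (4 + 2 * c)) :=
    exists_pow_lt_of_lt_one (by positivity) (by norm_num)
  obtain ⟨δa, hδapos, hδa⟩ := hunif (ε/8) (by positivity)
  obtain ⟨δb, hδbpos, hδb⟩ := beta_small hβ (ε/8) (by positivity)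
  set δ₃ : ℝ := min (min δa δb) 1 with hδ₃
  have hδ₃pos : 0 < δ₃ := by positivity
  have hδ₃le1 : δ₃ ≤ 1 := min_le_right _ _
  have hδ₃a : δ₃ ≤ δa := (min_le_left _ _).trans (min_le_left _ _)
  have hδ₃b : δ₃ ≤ δb := (min_le_left _ _).trans (min_le_right _ _)
  set ε'' : ℝ := min (ε/4 * δ₃ ^ α) (ε/16) with hε''
  have hε''pos : 0 < ε'' := by
    apply lt_min
    · have : (0:ℝ) < δ₃ ^ α := Real.rpow_pos_of_pos hδ₃pos α
      positivity
    · positivity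
  have hR1 : (1:ℝ) ≤ (2:ℝ)^K := one_le_pow₀ (by norm_num)
  have hev := unif_conv (fun n t => 1 - c * |t| ^ α + βn n t * |t| ^ α)
    (fun t => 1 - c * |t| ^ α + β t * |t| ^ α) hptF hmod ((2:ℝ)^K) (by positivity) ε'' hε''pos
  filter_upwards [hev] with n hn
  -- key: for |t| ≤ 2^K, |(βn n t - β t)| * |t|^α ≤ ε''
  have hkey : ∀ t : ℝ, |t| ≤ (2:ℝ)^K → |βn n t - β t| * |t| ^ α ≤ ε'' := by
    intro t ht
    have h1 := hn t ht
    have h2 : (1 - c * |t| ^ α + βn n t * |t| ^ α) - (1 - c * |t| ^ α + β t * |t| ^ α)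
        = (βn n t - β t) * |t| ^ α := by ring
    rw [h2] at h1
    rwa [abs_mul, abs_of_nonneg (Real.rpow_nonneg (abs_nonneg t) α)] at h1
  -- part 1 : sup over |t| ≤ 1
  have hpart1 : (⨆ t : {t : ℝ // |t| ≤ 1}, |βn n t.1 - β t.1|) ≤ ε / 4 := by
    refine ciSup_le fun ⟨t, ht⟩ => ?_
    by_cases hcase : |t| ≤ δ₃
    · calc |βn n t - β t| ≤ |βn n t| + |β t| := abs_sub _ _
        _ ≤ ε/8 + ε/8 := add_le_add (hδa n t (hcase.trans hδ₃a)) (hδb t (hcase.trans hδ₃b))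
        _ = ε / 4 := by ring
    · push_neg at hcase
      have htpos : 0 < |t| := hδ₃pos.trans hcase
      have hpowpos : 0 < |t| ^ α := Real.rpow_pos_of_pos htpos α
      have h3 : |βn n t - β t| * |t| ^ α ≤ ε'' := hkey t (ht.trans hR1)
      have h4 : ε'' ≤ ε/4 * δ₃ ^ α := min_le_left _ _
      have h5 : δ₃ ^ α ≤ |t| ^ α := Real.rpow_le_rpow hδ₃pos.le hcase.le hα.le
      have h6 : |βn n t - β t| * |t| ^ α ≤ (ε/4) * |t| ^ α := by nlinarith
      exact le_of_mul_le_mul_right h6 hpowpos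
  -- part 2 : the series
  have hfront : (∑ k ∈ Finset.range K, ((2:ℝ)^k)⁻¹ *
      ⨆ t : {t : ℝ // (2:ℝ)^k ≤ |t| ∧ |t| ≤ 2^(k+1)}, |βn n t.1 - β t.1|) ≤ ε / 8 := by
    have hterm : ∀ k ∈ Finset.range K, ((2:ℝ)^k)⁻¹ *
        (⨆ t : {t : ℝ // (2:ℝ)^k ≤ |t| ∧ |t| ≤ 2^(k+1)}, |βn n t.1 - β t.1|)
        ≤ (ε/16) * (2⁻¹:ℝ)^k := by
      intro k hk
      rw [Finset.mem_range] at hk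
      have hsup : (⨆ t : {t : ℝ // (2:ℝ)^k ≤ |t| ∧ |t| ≤ 2^(k+1)}, |βn n t.1 - β t.1|)
          ≤ ε/16 := by
        haveI := hne2 k
        refine ciSup_le fun ⟨t, ht1, ht2⟩ => ?_
        have h1t : (1:ℝ) ≤ |t| := le_trans (one_le_pow₀ (by norm_num)) ht1
        have hpow1 : (1:ℝ) ≤ |t| ^ α := Real.one_le_rpow h1t hα.le
        have htK : |t| ≤ (2:ℝ)^K :=
          ht2.trans (pow_le_pow_right₀ (by norm_num) hk)
        have h3 := hkey t htK
        have h4 : |βn n t - β t| ≤ |βn n t - β t| * |t| ^ α :=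
          le_mul_of_one_le_right (abs_nonneg _) hpow1
        have h5 : ε'' ≤ ε/16 := min_le_right _ _
        linarith
      calc ((2:ℝ)^k)⁻¹ * (⨆ t : {t : ℝ // (2:ℝ)^k ≤ |t| ∧ |t| ≤ 2^(k+1)}, |βn n t.1 - β t.1|)
          ≤ ((2:ℝ)^k)⁻¹ * (ε/16) := mul_le_mul_of_nonneg_left hsup (by positivity)
        _ = (ε/16) * (2⁻¹:ℝ)^k := by rw [inv_pow]; ring
    calc (∑ k ∈ Finset.range K, ((2:ℝ)^k)⁻¹ *
        ⨆ t : {t : ℝ // (2:ℝ)^k ≤ |t| ∧ |t| ≤ 2^(k+1)}, |βn n t.1 - β t.1|)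
        ≤ ∑ k ∈ Finset.range K, (ε/16) * (2⁻¹:ℝ)^k := Finset.sum_le_sum hterm
      _ = (ε/16) * ∑ k ∈ Finset.range K, (2⁻¹:ℝ)^k := by rw [Finset.mul_sum]
      _ ≤ (ε/16) * 2 := by
          apply mul_le_mul_of_nonneg_left _ (by positivity)
          have := sum_geometric_two_le K
          simpa [one_div] using this
      _ = ε / 8 := by ring
  have htail : (∑' k : ℕ, ((2:ℝ)^(k + K))⁻¹ *
      ⨆ t : {t : ℝ // (2:ℝ)^(k+K) ≤ |t| ∧ |t| ≤ 2^(k+K+1)}, |βn n t.1 - β t.1|) ≤ ε / 8 := by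
    have hsummtail : Summable (fun k : ℕ => ((2:ℝ)^(k + K))⁻¹ *
        ⨆ t : {t : ℝ // (2:ℝ)^(k+K) ≤ |t| ∧ |t| ≤ 2^(k+K+1)}, |βn n t.1 - β t.1|) :=
      (summable_nat_add_iff (f := fun k : ℕ => ((2:ℝ)^k)⁻¹ *
        ⨆ t : {t : ℝ // (2:ℝ)^k ≤ |t| ∧ |t| ≤ 2^(k+1)}, |βn n t.1 - β t.1|) K).mpr (hsum n)
    have hsumg : Summable (fun k : ℕ => ((4 + 2*c) * (2⁻¹:ℝ)^K) * (2⁻¹:ℝ)^k) :=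
      (summable_geometric_of_lt_one (by norm_num) (by norm_num)).mul_left _
    have hle : ∀ k : ℕ, ((2:ℝ)^(k + K))⁻¹ *
        (⨆ t : {t : ℝ // (2:ℝ)^(k+K) ≤ |t| ∧ |t| ≤ 2^(k+K+1)}, |βn n t.1 - β t.1|)
        ≤ ((4 + 2*c) * (2⁻¹:ℝ)^K) * (2⁻¹:ℝ)^k := by
      intro k
      calc ((2:ℝ)^(k + K))⁻¹ *
          (⨆ t : {t : ℝ // (2:ℝ)^(k+K) ≤ |t| ∧ |t| ≤ 2^(k+K+1)}, |βn n t.1 - β t.1|)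
          ≤ ((2:ℝ)^(k + K))⁻¹ * (4 + 2*c) :=
            mul_le_mul_of_nonneg_left (hbsup n (k + K)) (by positivity)
        _ = ((4 + 2*c) * (2⁻¹:ℝ)^K) * (2⁻¹:ℝ)^k := by
            rw [pow_add, mul_inv, ← inv_pow, ← inv_pow]; ring
    calc (∑' k : ℕ, ((2:ℝ)^(k + K))⁻¹ *
        ⨆ t : {t : ℝ // (2:ℝ)^(k+K) ≤ |t| ∧ |t| ≤ 2^(k+K+1)}, |βn n t.1 - β t.1|)
        ≤ ∑' k : ℕ, ((4 + 2*c) * (2⁻¹:ℝ)^K) * (2⁻¹:ℝ)^k :=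
          Summable.tsum_le_tsum hle hsummtail hsumg
      _ = ((4 + 2*c) * (2⁻¹:ℝ)^K) * ∑' k : ℕ, (2⁻¹:ℝ)^k := tsum_mul_left
      _ = ((4 + 2*c) * (2⁻¹:ℝ)^K) * 2 := by
          rw [tsum_geometric_of_lt_one (by norm_num) (by norm_num)]
          norm_num
      _ ≤ ε / 8 := by
          have h1 : (0:ℝ) < 4 + 2 * c := by linarith
          have h2 : (4 + 2*c) * ((2:ℝ)⁻¹)^K < (4 + 2*c) * (ε / (16 * (4 + 2 * c))) :=
            mul_lt_mul_of_pos_left hK h1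
          have h3 : (4 + 2*c) * (ε / (16 * (4 + 2 * c))) = ε / 16 := by
            field_simp
          nlinarith
  have hsplit := Summable.sum_add_tsum_nat_add (f := fun k : ℕ => ((2:ℝ)^k)⁻¹ *
      ⨆ t : {t : ℝ // (2:ℝ)^k ≤ |t| ∧ |t| ≤ 2^(k+1)}, |βn n t.1 - β t.1|) K (hsum n)
  have hpart2 : (∑' k : ℕ, ((2:ℝ)^k)⁻¹ *
      ⨆ t : {t : ℝ // (2:ℝ)^k ≤ |t| ∧ |t| ≤ 2^(k+1)}, |βn n t.1 - β t.1|) ≤ ε/8 + ε/8 := by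
    rw [← hsplit]
    exact add_le_add hfront htail
  have hnonneg1 : 0 ≤ ⨆ t : {t : ℝ // |t| ≤ 1}, |βn n t.1 - β t.1| :=
    Real.iSup_nonneg fun t => abs_nonneg _
  have hnonneg2 : 0 ≤ ∑' k : ℕ, ((2:ℝ)^k)⁻¹ *
      ⨆ t : {t : ℝ // (2:ℝ)^k ≤ |t| ∧ |t| ≤ 2^(k+1)}, |βn n t.1 - β t.1| :=
    tsum_nonneg fun k => mul_nonneg (by positivity) (hbnonneg n k)
  have hrho : rho (βn n) β ≤ ε/4 + (ε/8 + ε/8) := by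
    unfold rho
    exact add_le_add hpart1 hpart2
  rw [Real.norm_eq_abs, abs_of_nonneg]
  · calc rho (βn n) β ≤ ε/4 + (ε/8 + ε/8) := hrho
      _ < ε := by linarith
  · unfold rho
    exact add_nonneg hnonneg1 hnonneg2
end

section
/- Let 0 < α < 2, c > 0, let (Ω, 𝓕, P) be a probability space, and let μ be a measurable map from Ω to the space of probability measures on ℝ such that μ(ω) ∈ S(α, c) for every ω, with characteristic functions φ_ω(t) = 1 − c|t|^α + β(t, ω)|t|^α, and assume β(t, ω) → 0 as t → 0 uniformly in ω ∈ Ω. Then for every fixed t ∈ ℝ there exist δ₀ > 0 and c₀ > 0 such that for all N ≥ 1 and all (a₁, …, a_N) ∈ ℝ^N with max_{1≤k≤N} |a_k| ≤ δ₀ · A_N, where A_N = (Σ_{k=1}^N |a_k|^α)^{1/α}, one has ∫_Ω Π_{k=1}^N φ_ω(t a_k / A_N) dP(ω) ≥ c₀. -/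
open MeasureTheory Filter Finset
open scoped Topology BoundedContinuousFunction ENNReal

/-- Auxiliary: `exp (-y) ≤ 1 - y / 2` for `0 ≤ y ≤ 1`. -/
lemma aux_exp_le (y : ℝ) (h0 : 0 ≤ y) (h1 : y ≤ 1) : Real.exp (-y) ≤ 1 - y / 2 := by
  have h2 : Real.exp (-y) * Real.exp y = 1 := by rw [← Real.exp_add]; simp
  nlinarith [Real.add_one_le_exp y, Real.exp_pos (-y)]

/-- Let `μ` be a random measure with `μ(ω) ∈ S(α, c)` for every `ω`, with characteristic
functions `φ_ω(t) = 1 - c|t|^α + β(t, ω)|t|^α` where `β(t, ω) → 0` as `t → 0` uniformly in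
`ω`. Then for every fixed `t` there are `δ₀ > 0` and `c₀ > 0` such that
`∫_Ω ∏_{k≤N} φ_ω(t a_k / A_N) dP(ω) ≥ c₀` whenever `max_{1≤k≤N} |a_k| ≤ δ₀ A_N`. -/
theorem statement12
    {Ω : Type*} [MeasurableSpace Ω] (P : Measure Ω) [IsProbabilityMeasure P]
    (α c : ℝ) (hα : 0 < α) (hα2 : α < 2) (hc : 0 < c)
    (μ : Ω → Measure ℝ)
    (hμmeas : ∀ s : Set ℝ, MeasurableSet s → Measurable fun ω => μ ω s)
    (hμS : ∀ ω, MemS α c (μ ω))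
    (β : ℝ → Ω → ℝ)
    (hβeq : ∀ ω, ∀ s : ℝ, charFn (μ ω) s = ((1 - c * |s| ^ α + β s ω * |s| ^ α : ℝ) : ℂ))
    (hβunif : ∀ ε > (0 : ℝ), ∃ δ > (0 : ℝ), ∀ ω, ∀ s : ℝ, |s| ≤ δ → |β s ω| ≤ ε)
    (t : ℝ) :
    ∃ δ₀ > (0 : ℝ), ∃ c₀ > (0 : ℝ), ∀ N : ℕ, 1 ≤ N → ∀ a : ℕ → ℝ,
      (∀ k < N, |a k| ≤ δ₀ * wA α a N) →
      c₀ ≤ (∫ ω, (∏ k ∈ Finset.range N, charFn (μ ω) (t * a k / wA α a N)) ∂P).re := by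
  obtain ⟨δ, hδpos, hδ⟩ := hβunif (c / 2) (by positivity)
  have h3c : (0 : ℝ) < (3 * c)⁻¹ := by positivity
  set r : ℝ := min δ ((3 * c)⁻¹ ^ (1 / α)) with hrdef
  have hrpos : 0 < r := lt_min hδpos (Real.rpow_pos_of_pos h3c _)
  have hT : (0 : ℝ) < |t| + 1 := by positivity
  refine ⟨r / (|t| + 1), by positivity, Real.exp (-(3 * c * |t| ^ α)), Real.exp_pos _, ?_⟩
  intro N hN a ha
  set A := wA α a N with hAdef
  have hsumnn : 0 ≤ ∑ k ∈ Finset.range N, |a k| ^ α :=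
    Finset.sum_nonneg fun k _ => Real.rpow_nonneg (abs_nonneg _) _
  have hA0 : 0 ≤ A := Real.rpow_nonneg hsumnn _
  set s : ℕ → ℝ := fun k => t * a k / A with hsdef
  -- bound on |s k|
  have hs : ∀ k < N, |s k| ≤ r := by
    intro k hk
    rcases eq_or_lt_of_le hA0 with h | h
    · simp [hsdef, ← h, hrpos.le]
    · have hak := ha k hk
      have habs : |s k| = |t| * |a k| / A := by
        rw [hsdef]; simp only [abs_div, abs_mul, abs_of_pos h]
      rw [habs]
      calc |t| * |a k| / A ≤ |t| * (r / (|t| + 1) * A) / A := by gcongr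
        _ = |t| * (r / (|t| + 1)) := by field_simp
        _ = |t| * r / (|t| + 1) := by ring
        _ ≤ r := by rw [div_le_iff₀ hT]; nlinarith [abs_nonneg t, hrpos.le]
  have hβs : ∀ k < N, ∀ ω, |β (s k) ω| ≤ c / 2 := fun k hk ω =>
    hδ ω _ ((hs k hk).trans (min_le_left _ _))
  -- bound on |s k| ^ α
  have hx : ∀ k < N, 3 * c * |s k| ^ α ≤ 1 := by
    intro k hk
    have h1 : |s k| ^ α ≤ ((3 * c)⁻¹ ^ (1 / α)) ^ α :=
      Real.rpow_le_rpow (abs_nonneg _) ((hs k hk).trans (min_le_right _ _)) hα.le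
    have h2 : ((3 * c)⁻¹ ^ (1 / α)) ^ α = (3 * c)⁻¹ := by
      rw [← Real.rpow_mul h3c.le, one_div, inv_mul_cancel₀ hα.ne', Real.rpow_one]
    rw [h2] at h1
    calc 3 * c * |s k| ^ α ≤ 3 * c * (3 * c)⁻¹ := by
          exact mul_le_mul_of_nonneg_left h1 (by positivity)
      _ = 1 := mul_inv_cancel₀ (by positivity)
  set f : ℕ → Ω → ℝ := fun k ω => 1 - c * |s k| ^ α + β (s k) ω * |s k| ^ α with hfdef
  set g : Ω → ℝ := fun ω => ∏ k ∈ Finset.range N, f k ω with hgdef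
  have hxnn : ∀ k, 0 ≤ |s k| ^ α := fun k => Real.rpow_nonneg (abs_nonneg _) _
  have hf_low : ∀ k < N, ∀ ω, Real.exp (-(3 * c * |s k| ^ α)) ≤ f k ω := by
    intro k hk ω
    have hb := abs_le.mp (hβs k hk ω)
    have he := aux_exp_le (3 * c * |s k| ^ α) (by positivity) (hx k hk)
    have := hxnn k
    simp only [hfdef]
    nlinarith [hb.1, hb.2]
  have hf_up : ∀ k < N, ∀ ω, f k ω ≤ 1 := by
    intro k hk ω
    have hb := abs_le.mp (hβs k hk ω)
    have := hxnn k
    simp only [hfdef]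
    nlinarith [hb.2]
  -- sum bound
  have hsum : ∑ k ∈ Finset.range N, |s k| ^ α ≤ |t| ^ α := by
    rcases eq_or_lt_of_le hA0 with h | h
    · have : ∀ k ∈ Finset.range N, |s k| ^ α = 0 := by
        intro k _
        simp [hsdef, ← h, Real.zero_rpow hα.ne']
      rw [Finset.sum_congr rfl this]
      simp [Real.rpow_nonneg (abs_nonneg t)]
    · have hsumpos : 0 < ∑ k ∈ Finset.range N, |a k| ^ α := by
        rcases lt_or_eq_of_le hsumnn with h' | h'
        · exact h'
        · exfalso
          rw [hAdef, wA, ← h', Real.zero_rpow (one_div_ne_zero hα.ne')] at h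
          exact lt_irrefl _ h
      have hApow : A ^ α = ∑ k ∈ Finset.range N, |a k| ^ α := by
        rw [hAdef, wA, ← Real.rpow_mul hsumnn, one_div, inv_mul_cancel₀ hα.ne', Real.rpow_one]
      have hterm : ∀ k ∈ Finset.range N, |s k| ^ α = |t| ^ α * |a k| ^ α / A ^ α := by
        intro k _
        rw [hsdef]
        simp only [abs_div, abs_mul, abs_of_pos h]
        rw [Real.div_rpow (by positivity) hA0, Real.mul_rpow (abs_nonneg _) (abs_nonneg _)]
      rw [Finset.sum_congr rfl hterm, ← Finset.sum_div, ← Finset.mul_sum, hApow,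
        mul_div_assoc, div_self hsumpos.ne', mul_one]
  -- pointwise lower bound on the product
  have key : ∀ ω, Real.exp (-(3 * c * |t| ^ α)) ≤ g ω := by
    intro ω
    calc Real.exp (-(3 * c * |t| ^ α))
        ≤ Real.exp (∑ k ∈ Finset.range N, -(3 * c * |s k| ^ α)) := by
          rw [Real.exp_le_exp,
            show (∑ k ∈ Finset.range N, -(3 * c * |s k| ^ α))
              = -(3 * c * ∑ k ∈ Finset.range N, |s k| ^ α) by
                rw [Finset.sum_neg_distrib, ← Finset.mul_sum]]
          exact neg_le_neg (mul_le_mul_of_nonneg_left hsum (by positivity))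
      _ = ∏ k ∈ Finset.range N, Real.exp (-(3 * c * |s k| ^ α)) := Real.exp_sum _ _
      _ ≤ ∏ k ∈ Finset.range N, f k ω :=
          Finset.prod_le_prod (fun k _ => (Real.exp_pos _).le)
            (fun k hk => hf_low k (Finset.mem_range.mp hk) ω)
  -- relating the complex product to g
  have hcast : ∀ ω, ∏ k ∈ Finset.range N, charFn (μ ω) (s k) = ((g ω : ℝ) : ℂ) := by
    intro ω
    rw [hgdef]
    push_cast
    exact Finset.prod_congr rfl fun k _ => hβeq ω (s k)
  -- measurability
  have hκmeas : Measurable μ := Measure.measurable_of_measurable_coe μ hμmeas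
  let κ : ProbabilityTheory.Kernel Ω ℝ := ⟨μ, hκmeas⟩
  haveI : ProbabilityTheory.IsMarkovKernel κ := ⟨fun ω => (hμS ω).1⟩
  have hcharm : ∀ u : ℝ, StronglyMeasurable fun ω => charFn (μ ω) u := by
    intro u
    have hcont : Continuous fun x : ℝ => Complex.exp (Complex.I * (u * x)) := by fun_prop
    have hsm : StronglyMeasurable fun p : Ω × ℝ => Complex.exp (Complex.I * (u * p.2)) :=
      hcont.comp_stronglyMeasurable (measurable_snd.stronglyMeasurable)
    exact hsm.integral_kernel_prod_right' (κ := κ)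
  have hgsm : StronglyMeasurable g := by
    have h1 : StronglyMeasurable fun ω => ∏ k ∈ Finset.range N, charFn (μ ω) (s k) :=
      Finset.stronglyMeasurable_fun_prod _ fun k _ => hcharm (s k)
    have h2 : g = fun ω => (∏ k ∈ Finset.range N, charFn (μ ω) (s k)).re :=
      funext fun ω => by rw [hcast ω, Complex.ofReal_re]
    rw [h2]
    exact Complex.continuous_re.comp_stronglyMeasurable h1
  have hgint : Integrable g P := by
    refine (integrable_const (1 : ℝ)).mono' hgsm.aestronglyMeasurable
      (Filter.Eventually.of_forall fun ω => ?_)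
    rw [Real.norm_eq_abs, abs_of_nonneg ((Real.exp_pos _).le.trans (key ω))]
    exact Finset.prod_le_one
      (fun k hk => (Real.exp_pos _).le.trans (hf_low k (Finset.mem_range.mp hk) ω))
      (fun k hk => hf_up k (Finset.mem_range.mp hk) ω)
  -- conclude
  have hI : (∫ ω, ∏ k ∈ Finset.range N, charFn (μ ω) (s k) ∂P) = ((∫ ω, g ω ∂P : ℝ) : ℂ) := by
    rw [show (fun ω => ∏ k ∈ Finset.range N, charFn (μ ω) (s k))
        = fun ω => ((g ω : ℝ) : ℂ) from funext hcast]
    exact integral_ofReal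
  have hG : ∀ k, t * a k / A = s k := fun k => rfl
  simp only [hG, hI, Complex.ofReal_re]
  calc Real.exp (-(3 * c * |t| ^ α)) = ∫ _ω, Real.exp (-(3 * c * |t| ^ α)) ∂P := by
        simp
    _ ≤ ∫ ω, g ω ∂P := integral_mono (integrable_const _) hgint key
end

section
/- Let (X_n) be a determining sequence of random variables on a probability space (Ω, 𝓕, P) with limit random measure μ. Then for every measurable A ⊂ Ω with P(A) > 0 and every continuity point t of the limiting distribution function F_A, one has F_A(t) = E_A[μ(−∞, t)] = (1/P(A)) ∫_A μ(ω)(−∞, t) dP(ω). -/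
open MeasureTheory Filter Finset
open scoped Topology BoundedContinuousFunction ENNReal

/-- For a determining sequence `(X_n)` with limit random measure `μ`, for every `A` with
`P(A) > 0` and every continuity point `t` of the limiting distribution function `F_A`,
`F_A(t) = E_A(μ(-∞, t)) = (1/P(A)) ∫_A μ(ω)(-∞, t) dP(ω)`. -/
theorem statement15
    {Ω : Type*} [MeasurableSpace Ω] (P : Measure Ω) [IsProbabilityMeasure P]
    (X : ℕ → Ω → ℝ) (hXmeas : ∀ n, Measurable (X n)) (μ : Ω → Measure ℝ)
    (hdet : Determining P X) (hlrm : IsLimitRandomMeasure P X μ)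
    (A : Set Ω) (hA : MeasurableSet A) (hPA : P A ≠ 0)
    (F : ℝ → ℝ) (hF : IsDistFun F)
    (hFA : ∀ s : ℝ, ContinuousAt F s →
      Tendsto (fun n => (P (A ∩ {ω | X n ω < s})).toReal / (P A).toReal) atTop (𝓝 (F s)))
    (t : ℝ) (ht : ContinuousAt F t) :
    F t = (1 / (P A).toReal) * ∫ ω in A, (μ ω (Set.Iio t)).toReal ∂P := by
  classical
  obtain ⟨hprob, hmeasμ, G, hGdf, hGconv, hGweak⟩ := hlrm
  have hPAfin : P A ≠ ⊤ := measure_ne_top P A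
  set PA : ℝ := (P A).toReal with hPAdef
  have hPApos : 0 < PA := ENNReal.toReal_pos hPA hPAfin
  have hXset : ∀ n s, MeasurableSet {ω | X n ω ≤ s} := fun n s =>
    (hXmeas n) measurableSet_Iic
  -- dense set of common continuity points
  have hDcount : ({x | ¬ ContinuousAt F x} ∪ {x | ¬ ContinuousAt G x}).Countable :=
    (hF.1.countable_not_continuousAt).union (hGdf.1.countable_not_continuousAt)
  have hdense : Dense ({x | ¬ ContinuousAt F x} ∪ {x | ¬ ContinuousAt G x})ᶜ :=
    Set.Countable.dense_compl ℝ hDcount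
  have hpick : ∀ a b : ℝ, a < b →
      ∃ s, a < s ∧ s < b ∧ ContinuousAt F s ∧ ContinuousAt G s := by
    intro a b hab
    obtain ⟨s, hs1, hs2⟩ := hdense.exists_mem_open isOpen_Ioo (Set.nonempty_Ioo.2 hab)
    simp only [Set.mem_compl_iff, Set.mem_union, Set.mem_setOf_eq, not_or, not_not] at hs1
    exact ⟨s, hs2.1, hs2.2, hs1.1, hs1.2⟩
  -- lintegrals
  set L : ℝ → ℝ≥0∞ := fun s => ∫⁻ ω in A, μ ω (Set.Iic s) ∂P with hLdef
  set LJ : ℝ≥0∞ := ∫⁻ ω in A, μ ω (Set.Iio t) ∂P with hLJdef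
  have hle_one : ∀ (f : Ω → ℝ≥0∞), (∀ ω, f ω ≤ 1) → ∫⁻ ω in A, f ω ∂P ≤ 1 := by
    intro f hf
    calc ∫⁻ ω in A, f ω ∂P ≤ ∫⁻ _ in A, 1 ∂P := lintegral_mono hf
      _ = P A := by simp [Measure.restrict_apply_univ]
      _ ≤ 1 := prob_le_one
  have hLfin : ∀ s, L s ≠ ⊤ := fun s =>
    ne_top_of_le_ne_top ENNReal.one_ne_top
      (hle_one _ fun ω => by haveI := hprob ω; exact prob_le_one)
  have hLJfin : LJ ≠ ⊤ :=
    ne_top_of_le_ne_top ENNReal.one_ne_top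
      (hle_one _ fun ω => by haveI := hprob ω; exact prob_le_one)
  have hmeasIic : ∀ s : ℝ, Measurable fun ω => μ ω (Set.Iic s) := fun s =>
    hmeasμ _ measurableSet_Iic
  have hB : ∀ s : ℝ, ∫ ω in A, (μ ω (Set.Iic s)).toReal ∂P = (L s).toReal := by
    intro s
    exact integral_toReal ((hmeasIic s).aemeasurable)
      (ae_of_all _ fun ω => by haveI := hprob ω; exact measure_lt_top _ _)
  have hJ : ∫ ω in A, (μ ω (Set.Iio t)).toReal ∂P = LJ.toReal := by
    exact integral_toReal ((hmeasμ _ measurableSet_Iio).aemeasurable)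
      (ae_of_all _ fun ω => by haveI := hprob ω; exact measure_lt_top _ _)
  -- Key limit (from the weak L^∞ convergence with η = 1_A)
  have hL1 : ∀ s : ℝ, ContinuousAt G s →
      Tendsto (fun n => (P (A ∩ {ω | X n ω ≤ s})).toReal) atTop (𝓝 ((L s).toReal)) := by
    intro s hs
    have hη : Integrable (A.indicator fun _ => (1 : ℝ)) P :=
      (integrable_const (1 : ℝ)).indicator hA
    have h := hGweak s hs _ hη
    have e1 : ∀ n, (∫ ω, ({ω' | X n ω' ≤ s}.indicator (fun _ => (1 : ℝ)) ω) *
        (A.indicator (fun _ => (1 : ℝ)) ω) ∂P) = (P (A ∩ {ω | X n ω ≤ s})).toReal := by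
      intro n
      have hfun : (fun ω => ({ω' | X n ω' ≤ s}.indicator (fun _ => (1 : ℝ)) ω) *
          (A.indicator (fun _ => (1 : ℝ)) ω)) =
          ({ω' | X n ω' ≤ s} ∩ A).indicator (fun _ => (1 : ℝ)) := by
        funext ω
        rw [← Set.inter_indicator_mul]
        simp
      rw [hfun, integral_indicator_const (1 : ℝ) ((hXset n s).inter hA), Set.inter_comm]
      simp
      rfl
    have e2 : (∫ ω, (μ ω (Set.Iic s)).toReal * A.indicator (fun _ => (1 : ℝ)) ω ∂P) =
        (L s).toReal := by
      have hfun : (fun ω => (μ ω (Set.Iic s)).toReal * A.indicator (fun _ => (1 : ℝ)) ω) =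
          A.indicator (fun ω => (μ ω (Set.Iic s)).toReal) := by
        funext ω
        by_cases hω : ω ∈ A <;> simp [hω]
      rw [hfun, integral_indicator hA, hB s]
    rw [e2] at h
    exact h.congr e1
  -- limit from hFA, multiplied by P(A)
  have hL2 : ∀ s : ℝ, ContinuousAt F s →
      Tendsto (fun n => (P (A ∩ {ω | X n ω < s})).toReal) atTop (𝓝 (F s * PA)) := by
    intro s hs
    refine ((hFA s hs).mul_const PA).congr fun n => ?_
    rw [div_mul_cancel₀ _ (ne_of_gt hPApos)]
  -- comparison inequalities
  have I1 : ∀ s s' : ℝ, s < s' → ContinuousAt G s → ContinuousAt F s' →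
      (L s).toReal ≤ F s' * PA := by
    intro s s' hss' hGs hFs'
    refine le_of_tendsto_of_tendsto' (hL1 s hGs) (hL2 s' hFs') fun n => ?_
    refine ENNReal.toReal_mono (measure_ne_top _ _) (measure_mono ?_)
    exact Set.inter_subset_inter_right A fun ω hω => lt_of_le_of_lt hω hss'
  have I2 : ∀ s s' : ℝ, s ≤ s' → ContinuousAt F s → ContinuousAt G s' →
      F s * PA ≤ (L s').toReal := by
    intro s s' hss' hFs hGs'
    refine le_of_tendsto_of_tendsto' (hL2 s hFs) (hL1 s' hGs') fun n => ?_
    refine ENNReal.toReal_mono (measure_ne_top _ _) (measure_mono ?_)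
    exact Set.inter_subset_inter_right A fun ω hω => le_of_lt (lt_of_lt_of_le hω hss')
  have hFnonneg : ∀ s, (0 : ℝ) ≤ F s := fun s =>
    le_of_tendsto hF.2.1 (eventually_atBot.2 ⟨s, fun b hb => hF.1 hb⟩)
  -- upper bound : LJ.toReal ≤ F t * PA
  have hupper : LJ.toReal ≤ F t * PA := by
    refine le_of_forall_pos_le_add fun ε hε => ?_
    obtain ⟨δ, hδpos, hδ⟩ := Metric.continuousAt_iff.1 ht (ε / PA) (div_pos hε hPApos)
    obtain ⟨s', hs'1, hs'2, hs'F, _⟩ := hpick t (t + δ) (by linarith)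
    have hFs' : F s' ≤ F t + ε / PA := by
      have h1 : dist s' t < δ := by
        rw [Real.dist_eq, abs_of_pos (by linarith)]; linarith
      have h2 := hδ h1
      rw [Real.dist_eq, abs_lt] at h2
      linarith [h2.2]
    have hbound : ∀ s, s < t → ContinuousAt G s → (L s).toReal ≤ F t * PA + ε := by
      intro s hst hGs
      have h1 : (L s).toReal ≤ F s' * PA := I1 s s' (hst.trans hs'1) hGs hs'F
      have h2 : F s' * PA ≤ (F t + ε / PA) * PA :=
        mul_le_mul_of_nonneg_right hFs' hPApos.le
      have h3 : (F t + ε / PA) * PA = F t * PA + ε := by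
        field_simp
      linarith
    have hc_nonneg : (0 : ℝ) ≤ F t * PA + ε := by
      have := mul_nonneg (hFnonneg t) hPApos.le
      linarith
    set v : ℕ → ℝ := fun k => t - 1 / (k + 1) with hvdef
    have hvlt : ∀ k : ℕ, v k < t := by
      intro k
      have : (0 : ℝ) < 1 / (k + 1) := by positivity
      simp only [hvdef]; linarith
    have hvmono : Monotone v := by
      intro k l hkl
      have hk : (0 : ℝ) < (k : ℝ) + 1 := by positivity
      have hl : (0 : ℝ) < (l : ℝ) + 1 := by positivity
      have hkl' : ((k : ℝ) + 1) ≤ (l : ℝ) + 1 := by exact_mod_cast Nat.succ_le_succ hkl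
      have : (1 : ℝ) / (l + 1) ≤ 1 / (k + 1) := one_div_le_one_div_of_le hk hkl'
      simp only [hvdef]; linarith
    have hunion : Set.Iio t = ⋃ k : ℕ, Set.Iic (v k) := by
      ext x
      simp only [Set.mem_Iio, Set.mem_iUnion, Set.mem_Iic]
      constructor
      · intro hx
        obtain ⟨k, hk⟩ := exists_nat_one_div_lt (show (0 : ℝ) < t - x by linarith)
        exact ⟨k, by simp only [hvdef]; linarith⟩
      · intro ⟨k, hk⟩
        exact lt_of_le_of_lt hk (hvlt k)
    have hmono' : Monotone fun k : ℕ => fun ω => μ ω (Set.Iic (v k)) := by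
      intro k l hkl
      exact fun ω => measure_mono (Set.Iic_subset_Iic.2 (hvmono hkl))
    have hLJ' : LJ = ⨆ k : ℕ, L (v k) := by
      have hpt : ∀ ω, μ ω (Set.Iio t) = ⨆ k : ℕ, μ ω (Set.Iic (v k)) := by
        intro ω
        rw [hunion]
        exact Directed.measure_iUnion
          ((monotone_id.comp fun k l hkl => Set.Iic_subset_Iic.2 (hvmono hkl)).directed_le)
      calc LJ = ∫⁻ ω in A, ⨆ k : ℕ, μ ω (Set.Iic (v k)) ∂P := by
            rw [hLJdef]; exact lintegral_congr fun ω => hpt ω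
        _ = ⨆ k : ℕ, L (v k) :=
            lintegral_iSup (fun k => hmeasIic (v k)) hmono'
    have hLJle : LJ ≤ ENNReal.ofReal (F t * PA + ε) := by
      rw [hLJ']
      refine iSup_le fun k => ?_
      obtain ⟨s, hsa, hsb, _, hGs⟩ := hpick (v k) t (hvlt k)
      have h1 : L (v k) ≤ L s :=
        lintegral_mono fun ω => measure_mono (Set.Iic_subset_Iic.2 hsa.le)
      have h2 : (L s).toReal ≤ F t * PA + ε := hbound s hsb hGs
      exact h1.trans ((ENNReal.le_ofReal_iff_toReal_le (hLfin s) hc_nonneg).2 h2)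
    exact ENNReal.toReal_le_of_le_ofReal hc_nonneg hLJle
  -- lower bound : F t * PA ≤ LJ.toReal
  have hlower : F t * PA ≤ LJ.toReal := by
    refine le_of_forall_pos_le_add fun ε hε => ?_
    obtain ⟨δ, hδpos, hδ⟩ := Metric.continuousAt_iff.1 ht (ε / PA) (div_pos hε hPApos)
    obtain ⟨s, hs1, hs2, hsF, _⟩ := hpick (t - δ) t (by linarith)
    obtain ⟨s', hs'1, hs'2, _, hs'G⟩ := hpick s t hs2
    have hFs : F t ≤ F s + ε / PA := by
      have h1 : dist s t < δ := by
        rw [Real.dist_eq, abs_of_neg (by linarith)]; linarith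
      have h2 := hδ h1
      rw [Real.dist_eq, abs_lt] at h2
      linarith [h2.1]
    have h1 : F s * PA ≤ (L s').toReal := I2 s s' hs'1.le hsF hs'G
    have h2 : (L s').toReal ≤ LJ.toReal := by
      refine ENNReal.toReal_mono hLJfin (lintegral_mono fun ω => measure_mono ?_)
      exact fun x hx => lt_of_le_of_lt hx hs'2
    have h3 : F t * PA ≤ F s * PA + ε := by
      have h4 : (ε / PA) * PA = ε := div_mul_cancel₀ _ (ne_of_gt hPApos)
      nlinarith [mul_le_mul_of_nonneg_right hFs hPApos.le]
    linarith
  have heq : F t * PA = LJ.toReal := le_antisymm hlower hupper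
  rw [hJ, ← heq]
  field_simp
end
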